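/- arXiv:2004.11166 — 3 statements merged into one kernel-verified Lean document; each statement's English description precedes it below -/
import Mathlib

section
/- Let P be a finite set of pairs of points in the Euclidean plane, let l = (s_l, t_l) ∈ P be a flipped pair, and let p and q be vertices of the Hanan grid H(P) lying in the bounding box B(l) with p ≤ q. Then the maximum, over all Manhattan paths π_l ∈ Π_P(l) and π_v ∈ Π_P(p,q), of the length ‖π_l ∩ π_v‖ of their common part equals max{d_x(p,q), d_y(p,q)}. (Lemma 3.1(2).) -/
noncomputable section
open scoped Classical

/-- A point in the Euclidean plane. -/
abbrev Point : Type := ℝ × ℝ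

/-- The Manhattan distance `d(p, q)`. -/
def manh (p q : Point) : ℝ := |p.1 - q.1| + |p.2 - q.2|

/-- The Euclidean length `‖pq‖` of the segment between `p` and `q`. -/
def euclen (p q : Point) : ℝ := Real.sqrt ((p.1 - q.1) ^ 2 + (p.2 - q.2) ^ 2)

/-- The segment `pq` is axis-aligned. -/
def axisAligned (p q : Point) : Prop := p.1 = q.1 ∨ p.2 = q.2

/-- `z` lies in the bounding box `B(a, b)` (componentwise between `a ⊓ b` and `a ⊔ b`). -/
def inBox (a b z : Point) : Prop := a ⊓ b ≤ z ∧ z ≤ a ⊔ b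

lemma euclen_comm (p q : Point) : euclen p q = euclen q p := by
  unfold euclen; ring_nf

/-- Length of an (unordered) edge. -/
def sym2Len : Sym2 Point → ℝ := Sym2.lift ⟨euclen, euclen_comm⟩

/-- The length of a network, given by its (finite) edge set. -/
def netLength (N : Finset (Sym2 Point)) : ℝ := ∑ e ∈ N, sym2Len e

/-- A (simple) path in the plane, given by its sequence of (distinct) vertices. -/
structure GPath where
  k : ℕ
  pts : Fin (k + 1) → Point
  inj : Function.Injective pts

/-- The `i`-th edge of a path. -/
def GPath.edge (π : GPath) (i : Fin π.k) : Sym2 Point :=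
  s(π.pts i.castSucc, π.pts i.succ)

/-- The edge set of a path. -/
def GPath.edges (π : GPath) : Finset (Sym2 Point) :=
  Finset.image π.edge Finset.univ

/-- The total (Euclidean) length of a path. -/
def GPath.length (π : GPath) : ℝ :=
  ∑ i : Fin π.k, euclen (π.pts i.castSucc) (π.pts i.succ)

/-- `π` is a Manhattan path (M-path) for the pair `(s, t)`: an `s`–`t` path all of whose
edges are axis-aligned and whose total length equals the Manhattan distance `d(s, t)`. -/
def IsMPath (s t : Point) (π : GPath) : Prop :=
  π.pts 0 = s ∧ π.pts (Fin.last π.k) = t ∧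
  (∀ i : Fin π.k, axisAligned (π.pts i.castSucc) (π.pts i.succ)) ∧
  π.length = manh s t

/-- A GMMN instance: a finite set of pairs of points. -/
abbrev Inst : Type := Finset (Point × Point)

/-- The vertex set of the Hanan grid `H(P)`. -/
def hananV (P : Inst) : Finset Point :=
  ((P.image fun v => v.1.1) ∪ (P.image fun v => v.2.1)) ×ˢ
  ((P.image fun v => v.1.2) ∪ (P.image fun v => v.2.2))

/-- `{p, q}` is an edge of the Hanan grid `H(P)`: an axis-aligned segment between two distinct
grid vertices containing no third grid vertex. -/
def IsHananEdge (P : Inst) (p q : Point) : Prop :=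
  p ∈ hananV P ∧ q ∈ hananV P ∧ p ≠ q ∧ axisAligned p q ∧
  ∀ z ∈ hananV P, inBox p q z → z = p ∨ z = q

/-- All edges of the path `π` are edges of the Hanan grid `H(P)`. -/
def OnGrid (P : Inst) (π : GPath) : Prop :=
  ∀ i : Fin π.k, IsHananEdge P (π.pts i.castSucc) (π.pts i.succ)

/-- `π ∈ Π_P(u)`: an M-path for the pair `u` that is a subgraph of the Hanan grid `H(P)`. -/
def InPi (P : Inst) (u : Point × Point) (π : GPath) : Prop :=
  IsMPath u.1 u.2 π ∧ OnGrid P π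

/-- The network `∪_{v ∈ P} π_v` determined by a choice of M-paths. -/
def netOf (P : Inst) (f : Point × Point → GPath) : Finset (Sym2 Point) :=
  P.biUnion fun v => (f v).edges

/-- `f` gives a feasible solution in `Feas(P)`: an M-path on the Hanan grid for each pair. -/
def IsFeasChoice (P : Inst) (f : Point × Point → GPath) : Prop :=
  ∀ v ∈ P, InPi P v (f v)

/-- `f` gives an optimal solution in `Opt(P)`. -/
def IsOptChoice (P : Inst) (f : Point × Point → GPath) : Prop :=
  IsFeasChoice P f ∧
  ∀ g : Point × Point → GPath, IsFeasChoice P g →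
    netLength (netOf P f) ≤ netLength (netOf P g)

/-- Adjacency in the intersection graph `IG[P]`: `u ≠ v` and the induced subgrids
`H(P, u)` and `H(P, v)` share an edge. -/
def IGAdj (P : Inst) (u v : Point × Point) : Prop :=
  u ≠ v ∧ ∃ p q : Point, IsHananEdge P p q ∧
    inBox u.1 u.2 p ∧ inBox u.1 u.2 q ∧ inBox v.1 v.2 p ∧ inBox v.1 v.2 q

/-- The total length `‖π₁ ∩ π₂‖` of the segments shared by two paths. -/
def sharedLen (π₁ π₂ : GPath) : ℝ := netLength (π₁.edges ∩ π₂.edges)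

/-- A pair `(p, q)` with `p_x ≤ q_x` is regular if `p_y ≤ q_y`. -/
def Regular (u : Point × Point) : Prop := u.1.1 ≤ u.2.1 ∧ u.1.2 ≤ u.2.2

/-- A pair `(p, q)` with `p_x ≤ q_x` is flipped if `p_y ≥ q_y`. -/
def Flipped (u : Point × Point) : Prop := u.1.1 ≤ u.2.1 ∧ u.2.2 ≤ u.1.2

/-- The intersection graph `IG[P]` as a simple graph on the pairs of `P`. -/
def IG (P : Inst) : SimpleGraph {v : Point × Point // v ∈ P} where
  Adj u v := IGAdj P u.1 v.1
  symm := ⟨by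
    rintro u v ⟨hne, p, q, he, h1, h2, h3, h4⟩
    exact ⟨hne.symm, p, q, he, h3, h4, h1, h2⟩⟩
  loopless := ⟨fun u h => h.1 rfl⟩
namespace GMMN

/-- consecutive pairs of a list -/
def pairs {α : Type*} : List α → List (α × α)
  | a :: b :: r => (a, b) :: pairs (b :: r)
  | _ => []

@[simp] lemma pairs_nil {α : Type*} : pairs ([] : List α) = [] := rfl
@[simp] lemma pairs_single {α : Type*} (a : α) : pairs [a] = [] := rfl
@[simp] lemma pairs_cons {α : Type*} (a b : α) (r : List α) :
    pairs (a :: b :: r) = (a, b) :: pairs (b :: r) := rfl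

lemma mem_pairs_fst {α : Type*} {L : List α} {pr : α × α} (h : pr ∈ pairs L) :
    pr.1 ∈ L ∧ pr.2 ∈ L := by
  induction L with
  | nil => simp [pairs] at h
  | cons a r ih =>
    match r, h with
    | b :: r', h => ?_
    rcases List.mem_cons.mp h with h | h
    · subst h; simp
    · have := ih h; exact ⟨List.mem_cons_of_mem _ this.1, List.mem_cons_of_mem _ this.2⟩

lemma pairs_length {α : Type*} (L : List α) : (pairs L).length = L.length - 1 := by
  induction L with
  | nil => rfl
  | cons a r ih =>
    match r, ih with
    | [], _ => rfl
    | b :: r', ih => simp [pairs_cons] at ih ⊢; omega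

lemma pairs_getElem {α : Type*} (L : List α) (j : ℕ) (h : j < (pairs L).length) :
    (pairs L)[j] = (L[j]'(by have := pairs_length L; omega),
      L[j+1]'(by have := pairs_length L; omega)) := by
  induction L generalizing j with
  | nil => simp [pairs] at h
  | cons a r ih =>
    match r with
    | [] => simp [pairs] at h
    | b :: r' =>
      match j with
      | 0 => rfl
      | j + 1 =>
        simp only [pairs_cons, List.getElem_cons_succ]
        rw [ih]
        simp

lemma mem_pairs_iff_getElem {α : Type*} {L : List α} {pr : α × α} :
    pr ∈ pairs L ↔ ∃ j, ∃ h : j + 1 < L.length,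
      L[j] = pr.1 ∧ L[j+1] = pr.2 := by
  constructor
  · intro h
    obtain ⟨j, hj, hget⟩ := List.getElem_of_mem h
    rw [pairs_getElem] at hget
    have := pairs_length L
    exact ⟨j, by omega, by rw [← hget], by rw [← hget]⟩
  · rintro ⟨j, hj, h1, h2⟩
    have hl : j < (pairs L).length := by rw [pairs_length]; omega
    have := pairs_getElem L j hl
    have : (pairs L)[j] = pr := by rw [this, h1, h2]
    exact this ▸ List.getElem_mem hl

lemma nodup_pairs {α : Type*} {L : List α} (h : L.Nodup) : (pairs L).Nodup := by
  induction L with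
  | nil => simp
  | cons a r ih =>
    match r with
    | [] => simp
    | b :: r' =>
      simp only [pairs_cons, List.nodup_cons]
      refine ⟨fun hmem => ?_, ih (List.nodup_cons.mp h).2⟩
      have := (mem_pairs_fst hmem).1
      exact (List.nodup_cons.mp h).1 this

lemma pairs_map {α β : Type*} (f : α → β) (L : List α) :
    pairs (L.map f) = (pairs L).map (Prod.map f f) := by
  induction L with
  | nil => rfl
  | cons a r ih =>
    match r with
    | [] => rfl
    | b :: r' => simp only [List.map_cons, pairs_cons] at ih ⊢; rw [ih]; rfl

lemma pairs_append_tail {α : Type*} (L1 L2 : List α) (h1 : L1 ≠ []) (h2 : L2 ≠ [])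
    (h : L1.getLast h1 = L2.head h2) :
    pairs (L1 ++ L2.tail) = pairs L1 ++ pairs L2 := by
  induction L1 with
  | nil => exact absurd rfl h1
  | cons a r ih =>
    match r with
    | [] =>
      simp only [List.getLast_singleton] at h
      match L2, h2 with
      | c :: r2, _ =>
        simp at h; subst h
        simp [pairs]
    | b :: r' =>
      have hih := ih (by simp) (by rw [List.getLast_cons_cons] at h; exact h)
      simp only [List.cons_append, pairs_cons] at hih ⊢
      rw [hih]

lemma pairs_append_singleton {α : Type*} (L : List α) (h : L ≠ []) (a : α) :
    pairs (L ++ [a]) = pairs L ++ [(L.getLast h, a)] := by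
  induction L with
  | nil => exact absurd rfl h
  | cons x r ih =>
    match r with
    | [] => simp [pairs]
    | b :: r' =>
      have := ih (by simp)
      simp only [List.cons_append, pairs_cons] at this ⊢
      rw [this]
      simp [List.getLast_cons_cons]

end GMMN
namespace GMMN

/-- edges of a list of points, as unordered pairs -/
def edgesOf (L : List Point) : List (Sym2 Point) :=
  (pairs L).map (fun pr => s(pr.1, pr.2))

lemma sym2Len_mk (a b : Point) : sym2Len s(a, b) = euclen a b := rfl

/-- length of a polyline -/
def listLen (L : List Point) : ℝ := ((edgesOf L).map sym2Len).sum

lemma nodup_edgesOf {L : List Point} (h : L.Nodup) : (edgesOf L).Nodup := by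
  induction L with
  | nil => simp [edgesOf]
  | cons a r ih =>
    match r with
    | [] => simp [edgesOf]
    | b :: r' =>
      simp only [edgesOf, pairs_cons, List.map_cons, List.nodup_cons]
      constructor
      · intro hmem
        simp only [List.mem_map] at hmem
        obtain ⟨pr, hpr, heq⟩ := hmem
        have hmf := mem_pairs_fst hpr
        have ha : a ∈ b :: r' := by
          rcases Sym2.eq_iff.mp heq.symm with ⟨h1, _⟩ | ⟨h1, _⟩
          · rw [h1]; exact hmf.1
          · rw [h1]; exact hmf.2
        exact (List.nodup_cons.mp h).1 ha
      · exact ih (List.nodup_cons.mp h).2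

lemma edgesOf_reverse (L : List Point) : edgesOf L.reverse = (edgesOf L).reverse := by
  induction L with
  | nil => rfl
  | cons a r ih =>
    match r with
    | [] => rfl
    | b :: r' =>
      have hne : (b :: r').reverse ≠ [] := by simp
      have hlast : ((b :: r').reverse).getLast hne = b := by
        rw [List.getLast_reverse]; rfl
      have key : (a :: b :: r').reverse = (b :: r').reverse ++ [a] := by simp
      rw [key, show edgesOf ((b :: r').reverse ++ [a]) =
        (pairs ((b :: r').reverse ++ [a])).map (fun pr => s(pr.1, pr.2)) from rfl,
        pairs_append_singleton _ hne a, hlast]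
      simp only [List.map_append, List.map_cons, List.map_nil]
      have : edgesOf ((b :: r').reverse) = (edgesOf (b :: r')).reverse := ih
      rw [show (pairs (b :: r').reverse).map (fun pr => s(pr.1, pr.2)) = edgesOf ((b:: r').reverse) from rfl]
      rw [this]
      simp [edgesOf, Sym2.eq_swap]

lemma listLen_reverse (L : List Point) : listLen L.reverse = listLen L := by
  simp [listLen, edgesOf_reverse, List.sum_reverse]

lemma edgesOf_append_tail (L1 L2 : List Point) (h1 : L1 ≠ []) (h2 : L2 ≠ [])
    (h : L1.getLast h1 = L2.head h2) :
    edgesOf (L1 ++ L2.tail) = edgesOf L1 ++ edgesOf L2 := by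
  simp [edgesOf, pairs_append_tail L1 L2 h1 h2 h]

lemma listLen_append_tail (L1 L2 : List Point) (h1 : L1 ≠ []) (h2 : L2 ≠ [])
    (h : L1.getLast h1 = L2.head h2) :
    listLen (L1 ++ L2.tail) = listLen L1 + listLen L2 := by
  simp [listLen, edgesOf_append_tail L1 L2 h1 h2 h]

/-- telescoping sum for sorted lists of reals, mapped to segment lengths -/
lemma pairs_telescope (T : List ℝ) (h : T ≠ []) :
    ((pairs T).map (fun pr => pr.2 - pr.1)).sum = T.getLast h - T.head h := by
  induction T with
  | nil => exact absurd rfl h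
  | cons a r ih =>
    match r with
    | [] => simp
    | b :: r' =>
      have := ih (by simp)
      simp only [pairs_cons, List.map_cons, List.sum_cons, this, List.getLast_cons_cons,
        List.head_cons]
      ring

end GMMN
namespace GMMN

/-- build a GPath from a nonempty nodup list of points -/
def ofList (L : List Point) (h : L ≠ []) (hnd : L.Nodup) : GPath where
  k := L.length - 1
  pts i := L[i.1]'(by have := List.length_pos_iff.mpr h; have := i.2; omega)
  inj := by
    intro i j hij
    have hpos := List.length_pos_iff.mpr h
    have hi : i.1 < L.length := by have := i.2; omega
    have hj : j.1 < L.length := by have := j.2; omega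
    have := List.nodup_iff_injective_get.mp hnd
      (a₁ := ⟨i.1, hi⟩) (a₂ := ⟨j.1, hj⟩) (by simpa [List.get_eq_getElem] using hij)
    exact Fin.ext (by simpa using congrArg Fin.val this)

lemma ofList_k (L : List Point) (h : L ≠ []) (hnd : L.Nodup) :
    (ofList L h hnd).k = L.length - 1 := rfl

lemma ofList_pts (L : List Point) (h : L ≠ []) (hnd : L.Nodup) (i : Fin ((ofList L h hnd).k + 1)) :
    (ofList L h hnd).pts i = L[i.1]'(by
      have := List.length_pos_iff.mpr h
      have : i.1 < L.length - 1 + 1 := i.2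
      omega) := rfl

lemma ofList_pts_zero (L : List Point) (h : L ≠ []) (hnd : L.Nodup) :
    (ofList L h hnd).pts 0 = L.head h := by
  rw [ofList_pts]
  simp [List.head_eq_getElem]

lemma ofList_pts_last (L : List Point) (h : L ≠ []) (hnd : L.Nodup) :
    (ofList L h hnd).pts (Fin.last _) = L.getLast h := by
  have hpos := List.length_pos_iff.mpr h
  rw [ofList_pts, List.getLast_eq_getElem]
  congr 1

lemma ofList_edge (L : List Point) (h : L ≠ []) (hnd : L.Nodup) (i : Fin (ofList L h hnd).k) :
    (ofList L h hnd).edge i =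
      s(L[i.1]'(by have : i.1 < L.length - 1 := i.2; omega),
        L[i.1+1]'(by have : i.1 < L.length - 1 := i.2; omega)) := rfl

lemma ofList_edge_mem (L : List Point) (h : L ≠ []) (hnd : L.Nodup) (i : Fin (ofList L h hnd).k) :
    (ofList L h hnd).edge i ∈ edgesOf L := by
  rw [ofList_edge]
  simp only [edgesOf, List.mem_map]
  have hi : i.1 < L.length - 1 := i.2
  refine ⟨(L[i.1]'(by omega), L[i.1+1]'(by omega)), ?_, rfl⟩
  exact mem_pairs_iff_getElem.mpr ⟨i.1, by omega, rfl, rfl⟩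

lemma ofList_edges (L : List Point) (h : L ≠ []) (hnd : L.Nodup) :
    (ofList L h hnd).edges = (edgesOf L).toFinset := by
  ext e
  simp only [GPath.edges, Finset.mem_image, Finset.mem_univ, true_and, List.mem_toFinset]
  constructor
  · rintro ⟨i, rfl⟩; exact ofList_edge_mem L h hnd i
  · intro he
    simp only [edgesOf, List.mem_map] at he
    obtain ⟨pr, hpr, rfl⟩ := he
    obtain ⟨j, hj, hg1, hg2⟩ := mem_pairs_iff_getElem.mp hpr
    refine ⟨⟨j, by show j < L.length - 1; omega⟩, ?_⟩
    rw [ofList_edge]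
    simp only [hg1, hg2]

lemma edgesOf_length (L : List Point) : (edgesOf L).length = L.length - 1 := by
  simp [edgesOf, pairs_length]

lemma edgesOf_getElem (L : List Point) (j : ℕ) (hj : j < (edgesOf L).length) :
    (edgesOf L)[j] = s(L[j]'(by have := edgesOf_length L; omega),
      L[j+1]'(by have := edgesOf_length L; omega)) := by
  simp only [edgesOf, List.getElem_map]
  rw [pairs_getElem]

lemma ofList_length (L : List Point) (h : L ≠ []) (hnd : L.Nodup) :
    (ofList L h hnd).length = listLen L := by
  have hlen : (edgesOf L).length = (ofList L h hnd).k := by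
    rw [edgesOf_length, ofList_k]
  rw [GPath.length, listLen]
  rw [← Fin.sum_univ_fun_getElem (edgesOf L) sym2Len]
  refine (Fintype.sum_equiv (finCongr hlen) _ _ ?_).symm
  intro j
  have hj : j.1 < (edgesOf L).length := j.2
  have hj2 : j.1 + 1 < L.length := by have := edgesOf_length L; omega
  rw [edgesOf_getElem L j.1 hj, sym2Len_mk]
  rfl

end GMMN
namespace GMMN

lemma head_le_of_sorted {l : List ℝ} (hs : l.Pairwise (· ≤ ·)) {x : ℝ} (hx : x ∈ l)
    (hne : l ≠ []) : l.head hne ≤ x := by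
  match l with
  | a :: r =>
    rcases List.mem_cons.mp hx with rfl | hx
    · exact le_refl _
    · exact (List.pairwise_cons.mp hs).1 x hx

lemma le_getLast_of_sorted {l : List ℝ} :
    l.Pairwise (· ≤ ·) → ∀ {x : ℝ}, x ∈ l → ∀ (hne : l ≠ []), x ≤ l.getLast hne := by
  induction l with
  | nil => intro _ x hx; simp at hx
  | cons a r ih =>
    intro hs x hx hne
    match r with
    | [] => simp at hx; simp [hx]
    | b :: r' =>
      rw [List.getLast_cons_cons]
      rcases List.mem_cons.mp hx with rfl | hx
      · calc x ≤ b := (List.pairwise_cons.mp hs).1 b (by simp)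
          _ ≤ _ := ih (List.pairwise_cons.mp hs).2 (by simp) (by simp)
      · exact ih (List.pairwise_cons.mp hs).2 hx (by simp)

/-- The sorted list of elements of `S` in `[a, b]`. -/
def sfl (S : Finset ℝ) (a b : ℝ) : List ℝ :=
  (S.filter (fun x => a ≤ x ∧ x ≤ b)).sort (· ≤ ·)

variable {S : Finset ℝ} {a b : ℝ}

lemma mem_sfl {x : ℝ} : x ∈ sfl S a b ↔ x ∈ S ∧ a ≤ x ∧ x ≤ b := by
  simp [sfl, Finset.mem_sort, Finset.mem_filter]

lemma sfl_sorted : (sfl S a b).Pairwise (· < ·) := (Finset.sortedLT_sort _).pairwise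

lemma sfl_sorted_le : (sfl S a b).Pairwise (· ≤ ·) := Finset.pairwise_sort _ _

lemma sfl_nodup : (sfl S a b).Nodup := Finset.sort_nodup _ _

lemma sfl_ne_nil (ha : a ∈ S) (hab : a ≤ b) : sfl S a b ≠ [] := by
  intro h
  have : a ∈ sfl S a b := mem_sfl.mpr ⟨ha, le_refl _, hab⟩
  rw [h] at this; exact List.not_mem_nil this

lemma head_sfl (ha : a ∈ S) (hb : b ∈ S) (hab : a ≤ b) :
    (sfl S a b).head (sfl_ne_nil ha hab) = a := by
  have h1 : (sfl S a b).head (sfl_ne_nil ha hab) ∈ sfl S a b := List.head_mem _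
  have h2 := (mem_sfl.mp h1).2.1
  have h3 : (sfl S a b).head (sfl_ne_nil ha hab) ≤ a :=
    head_le_of_sorted sfl_sorted_le (mem_sfl.mpr ⟨ha, le_refl _, hab⟩) _
  linarith

lemma getLast_sfl (ha : a ∈ S) (hb : b ∈ S) (hab : a ≤ b) :
    (sfl S a b).getLast (sfl_ne_nil ha hab) = b := by
  have h1 : (sfl S a b).getLast (sfl_ne_nil ha hab) ∈ sfl S a b := List.getLast_mem _
  have h2 := (mem_sfl.mp h1).2.2
  have h3 : b ≤ (sfl S a b).getLast (sfl_ne_nil ha hab) :=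
    le_getLast_of_sorted sfl_sorted_le (mem_sfl.mpr ⟨hb, hab, le_refl _⟩) _
  linarith

lemma getElem_lt_getElem {l : List ℝ} (hs : l.Pairwise (· < ·)) {i j : ℕ}
    (hi : i < l.length) (hj : j < l.length) (hij : i < j) : l[i] < l[j] := by
  have := (List.sortedLT_iff_pairwise.mpr hs).strictMono_get (a := ⟨i, hi⟩) (b := ⟨j, hj⟩) (by simpa using hij)
  simpa using this

lemma getElem_le_getElem {l : List ℝ} (hs : l.Pairwise (· < ·)) {i j : ℕ}
    (hi : i < l.length) (hj : j < l.length) (hij : i ≤ j) : l[i] ≤ l[j] := by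
  rcases Nat.lt_or_ge i j with h | h
  · exact le_of_lt (getElem_lt_getElem hs hi hj h)
  · have : i = j := by omega
    subst this
    exact le_refl _

/-- Characterization of consecutive pairs in `sfl`. -/
lemma mem_pairs_sfl {pr : ℝ × ℝ} :
    pr ∈ pairs (sfl S a b) ↔ pr.1 ∈ S ∧ pr.2 ∈ S ∧ a ≤ pr.1 ∧ pr.1 < pr.2 ∧ pr.2 ≤ b ∧
      ∀ z ∈ S, ¬(pr.1 < z ∧ z < pr.2) := by
  have hs : (sfl S a b).Pairwise (· < ·) := sfl_sorted
  constructor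
  · intro h
    obtain ⟨j, hj, h1, h2⟩ := mem_pairs_iff_getElem.mp h
    have m1 : pr.1 ∈ sfl S a b := h1 ▸ List.getElem_mem (by omega)
    have m2 : pr.2 ∈ sfl S a b := h2 ▸ List.getElem_mem hj
    have hlt : pr.1 < pr.2 := by
      rw [← h1, ← h2]; exact getElem_lt_getElem hs (by omega) hj (by omega)
    refine ⟨(mem_sfl.mp m1).1, (mem_sfl.mp m2).1, (mem_sfl.mp m1).2.1, hlt,
      (mem_sfl.mp m2).2.2, ?_⟩
    rintro z hz ⟨hz1, hz2⟩
    have hmz : z ∈ sfl S a b := mem_sfl.mpr ⟨hz, by linarith [(mem_sfl.mp m1).2.1],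
      by linarith [(mem_sfl.mp m2).2.2]⟩
    obtain ⟨m, hm, hmeq⟩ := List.getElem_of_mem hmz
    have c1 : j < m := by
      by_contra hc
      have : z ≤ pr.1 := le_of_eq_of_le (hmeq.symm) (le_of_le_of_eq
        (getElem_le_getElem hs hm (by omega) (by omega)) h1)
      linarith
    have c2 : m < j + 1 := by
      by_contra hc
      have : pr.2 ≤ z := le_of_eq_of_le (h2.symm) (le_of_le_of_eq
        (getElem_le_getElem hs hj hm (by omega)) hmeq)
      linarith
    omega
  · rintro ⟨hm1, hm2, ha1, hlt, hb2, hbetween⟩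
    have m1 : pr.1 ∈ sfl S a b := mem_sfl.mpr ⟨hm1, ha1, by linarith⟩
    have m2 : pr.2 ∈ sfl S a b := mem_sfl.mpr ⟨hm2, by linarith, hb2⟩
    obtain ⟨j, hj, hjeq⟩ := List.getElem_of_mem m1
    obtain ⟨m, hm, hmeq⟩ := List.getElem_of_mem m2
    have hjm : j < m := by
      by_contra hc
      have : pr.2 ≤ pr.1 := le_of_eq_of_le (hmeq.symm) (le_of_le_of_eq
        (getElem_le_getElem hs hm hj (by omega)) hjeq)
      linarith
    have hj1 : j + 1 < (sfl S a b).length := by omega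
    have hz1 : pr.1 < (sfl S a b)[j+1] := by
      rw [← hjeq]; exact getElem_lt_getElem hs hj hj1 (by omega)
    have hz2 : (sfl S a b)[j+1] ≤ pr.2 :=
      le_of_le_of_eq (getElem_le_getElem hs hj1 hm (by omega)) hmeq
    have hfin : (sfl S a b)[j+1] = pr.2 := by
      rcases lt_or_eq_of_le hz2 with h' | h'
      · exact absurd ⟨hz1, h'⟩ (hbetween _ (mem_sfl.mp (List.getElem_mem hj1)).1)
      · exact h'
    exact mem_pairs_iff_getElem.mpr ⟨j, by omega, hjeq, hfin⟩

lemma sfl_pairs_sum (ha : a ∈ S) (hb : b ∈ S) (hab : a ≤ b) :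
    ((pairs (sfl S a b)).map (fun pr => pr.2 - pr.1)).sum = b - a := by
  rw [pairs_telescope _ (sfl_ne_nil ha hab), getLast_sfl ha hb hab, head_sfl ha hb hab]

end GMMN
namespace GMMN

lemma euclen_horiz (x1 x2 y : ℝ) : euclen (x1, y) (x2, y) = |x1 - x2| := by
  simp [euclen, Real.sqrt_sq_eq_abs]

lemma euclen_vert (x y1 y2 : ℝ) : euclen (x, y1) (x, y2) = |y1 - y2| := by
  simp [euclen, Real.sqrt_sq_eq_abs]

/-- horizontal run at height `y`, through the x-coordinates of `S` in `[a, b]` -/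
def runH (S : Finset ℝ) (a b y : ℝ) : List Point := (sfl S a b).map (fun x => (x, y))

/-- vertical run at abscissa `x`, through the y-coordinates of `S` in `[a, b]` -/
def runV (S : Finset ℝ) (a b x : ℝ) : List Point := (sfl S a b).map (fun yv => (x, yv))

variable {S : Finset ℝ} {a b y x : ℝ}

lemma runH_ne_nil (ha : a ∈ S) (hab : a ≤ b) : runH S a b y ≠ [] := by
  simp [runH, sfl_ne_nil ha hab]

lemma runV_ne_nil (ha : a ∈ S) (hab : a ≤ b) : runV S a b x ≠ [] := by
  simp [runV, sfl_ne_nil ha hab]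

lemma runH_nodup : (runH S a b y).Nodup :=
  (List.nodup_map_iff (fun u v huv => by simpa using congrArg Prod.fst huv)).mpr sfl_nodup

lemma runV_nodup : (runV S a b x).Nodup :=
  (List.nodup_map_iff (fun u v huv => by simpa using congrArg Prod.snd huv)).mpr sfl_nodup

lemma mem_runH {z : Point} : z ∈ runH S a b y ↔ z.1 ∈ S ∧ a ≤ z.1 ∧ z.1 ≤ b ∧ z.2 = y := by
  simp only [runH, List.mem_map]
  constructor
  · rintro ⟨x', hx', rfl⟩
    exact ⟨(mem_sfl.mp hx').1, (mem_sfl.mp hx').2.1, (mem_sfl.mp hx').2.2, rfl⟩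
  · rintro ⟨h1, h2, h3, h4⟩
    exact ⟨z.1, mem_sfl.mpr ⟨h1, h2, h3⟩, by rw [← h4]⟩

lemma mem_runV {z : Point} : z ∈ runV S a b x ↔ z.2 ∈ S ∧ a ≤ z.2 ∧ z.2 ≤ b ∧ z.1 = x := by
  simp only [runV, List.mem_map]
  constructor
  · rintro ⟨y', hy', rfl⟩
    exact ⟨(mem_sfl.mp hy').1, (mem_sfl.mp hy').2.1, (mem_sfl.mp hy').2.2, rfl⟩
  · rintro ⟨h1, h2, h3, h4⟩
    exact ⟨z.2, mem_sfl.mpr ⟨h1, h2, h3⟩, by rw [← h4]⟩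

lemma head_runH (ha : a ∈ S) (hb : b ∈ S) (hab : a ≤ b) :
    (runH S a b y).head (runH_ne_nil ha hab) = (a, y) := by
  simp only [runH]
  rw [List.head_map, head_sfl ha hb hab]

lemma getLast_runH (ha : a ∈ S) (hb : b ∈ S) (hab : a ≤ b) :
    (runH S a b y).getLast (runH_ne_nil ha hab) = (b, y) := by
  simp only [runH]
  rw [List.getLast_map, getLast_sfl ha hb hab]

lemma head_runV (ha : a ∈ S) (hb : b ∈ S) (hab : a ≤ b) :
    (runV S a b x).head (runV_ne_nil ha hab) = (x, a) := by
  simp only [runV]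
  rw [List.head_map, head_sfl ha hb hab]

lemma getLast_runV (ha : a ∈ S) (hb : b ∈ S) (hab : a ≤ b) :
    (runV S a b x).getLast (runV_ne_nil ha hab) = (x, b) := by
  simp only [runV]
  rw [List.getLast_map, getLast_sfl ha hb hab]

lemma mem_pairs_runH {pr : Point × Point} :
    pr ∈ pairs (runH S a b y) ↔ pr.1.2 = y ∧ pr.2.2 = y ∧ pr.1.1 ∈ S ∧ pr.2.1 ∈ S ∧
      a ≤ pr.1.1 ∧ pr.1.1 < pr.2.1 ∧ pr.2.1 ≤ b ∧ ∀ z ∈ S, ¬(pr.1.1 < z ∧ z < pr.2.1) := by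
  rw [runH, pairs_map]
  constructor
  · intro h
    obtain ⟨qr, hqr, heq⟩ := List.mem_map.mp h
    obtain ⟨hm1, hm2, h1, h2, h3, h4⟩ := mem_pairs_sfl.mp hqr
    subst heq
    exact ⟨rfl, rfl, hm1, hm2, h1, h2, h3, h4⟩
  · rintro ⟨hy1, hy2, hm1, hm2, h1, h2, h3, h4⟩
    refine List.mem_map.mpr ⟨(pr.1.1, pr.2.1), mem_pairs_sfl.mpr ⟨hm1, hm2, h1, h2, h3, h4⟩, ?_⟩
    have e1 : pr.1 = (pr.1.1, y) := by rw [← hy1]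
    have e2 : pr.2 = (pr.2.1, y) := by rw [← hy2]
    rw [Prod.ext_iff]
    exact ⟨e1.symm, e2.symm⟩

lemma mem_pairs_runV {pr : Point × Point} :
    pr ∈ pairs (runV S a b x) ↔ pr.1.1 = x ∧ pr.2.1 = x ∧ pr.1.2 ∈ S ∧ pr.2.2 ∈ S ∧
      a ≤ pr.1.2 ∧ pr.1.2 < pr.2.2 ∧ pr.2.2 ≤ b ∧ ∀ z ∈ S, ¬(pr.1.2 < z ∧ z < pr.2.2) := by
  rw [runV, pairs_map]
  constructor
  · intro h
    obtain ⟨qr, hqr, heq⟩ := List.mem_map.mp h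
    obtain ⟨hm1, hm2, h1, h2, h3, h4⟩ := mem_pairs_sfl.mp hqr
    subst heq
    exact ⟨rfl, rfl, hm1, hm2, h1, h2, h3, h4⟩
  · rintro ⟨hy1, hy2, hm1, hm2, h1, h2, h3, h4⟩
    refine List.mem_map.mpr ⟨(pr.1.2, pr.2.2), mem_pairs_sfl.mpr ⟨hm1, hm2, h1, h2, h3, h4⟩, ?_⟩
    have e1 : pr.1 = (x, pr.1.2) := by rw [← hy1]
    have e2 : pr.2 = (x, pr.2.2) := by rw [← hy2]
    rw [Prod.ext_iff]
    exact ⟨e1.symm, e2.symm⟩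

lemma listLen_runH (ha : a ∈ S) (hb : b ∈ S) (hab : a ≤ b) :
    listLen (runH S a b y) = b - a := by
  rw [listLen, ← sfl_pairs_sum ha hb hab (S := S)]
  simp only [runH, edgesOf, pairs_map, List.map_map]
  congr 1
  apply List.map_congr_left
  intro pr hpr
  obtain ⟨_, _, _, h2, _, _⟩ := mem_pairs_sfl.mp hpr
  simp only [Function.comp]
  rw [show (Prod.map (fun x => ((x, y) : Point)) (fun x => ((x, y) : Point)) pr) =
    ((pr.1, y), (pr.2, y)) from rfl]
  rw [sym2Len_mk, euclen_horiz]
  rw [abs_sub_comm, abs_of_nonneg (by linarith)]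

lemma listLen_runV (ha : a ∈ S) (hb : b ∈ S) (hab : a ≤ b) :
    listLen (runV S a b x) = b - a := by
  rw [listLen, ← sfl_pairs_sum ha hb hab (S := S)]
  simp only [runV, edgesOf, pairs_map, List.map_map]
  congr 1
  apply List.map_congr_left
  intro pr hpr
  obtain ⟨_, _, _, h2, _, _⟩ := mem_pairs_sfl.mp hpr
  simp only [Function.comp]
  rw [show (Prod.map (fun v => ((x, v) : Point)) (fun v => ((x, v) : Point)) pr) =
    ((x, pr.1), (x, pr.2)) from rfl]
  rw [sym2Len_mk, euclen_vert]
  rw [abs_sub_comm, abs_of_nonneg (by linarith)]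

end GMMN
namespace GMMN

section FinTel

variable {k : ℕ} (f : Fin (k + 1) → ℝ)

private def extNat (f : Fin (k+1) → ℝ) : ℕ → ℝ := fun n => f ⟨min n k, by omega⟩

lemma extNat_eq (i : Fin (k+1)) : extNat f i.1 = f i := by
  unfold extNat
  congr 1
  exact Fin.ext (by simp; omega)

lemma fin_telescope : ∑ i : Fin k, (f i.succ - f i.castSucc) = f (Fin.last k) - f 0 := by
  have h1 : ∀ i : Fin k, f i.succ - f i.castSucc = extNat f (i.1 + 1) - extNat f i.1 := by
    intro i
    rw [show extNat f (i.1+1) = f i.succ from extNat_eq f i.succ,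
        show extNat f i.1 = f i.castSucc from extNat_eq f i.castSucc]
  calc ∑ i : Fin k, (f i.succ - f i.castSucc)
      = ∑ i : Fin k, (extNat f (i.1 + 1) - extNat f i.1) := by
        exact Finset.sum_congr rfl (fun i _ => h1 i)
    _ = ∑ i ∈ Finset.range k, (extNat f (i + 1) - extNat f i) :=
        Fin.sum_univ_eq_sum_range (fun n => extNat f (n+1) - extNat f n) k
    _ = extNat f k - extNat f 0 := Finset.sum_range_sub _ k
    _ = f (Fin.last k) - f 0 := by
        rw [show extNat f k = f (Fin.last k) from extNat_eq f (Fin.last k),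
            show extNat f 0 = f 0 from extNat_eq f 0]

lemma abs_tel : |f (Fin.last k) - f 0| ≤ ∑ i : Fin k, |f i.succ - f i.castSucc| := by
  rw [← fin_telescope f]
  exact Finset.abs_sum_le_sum_abs _ _

lemma mono_of_abs_tel (h : ∑ i : Fin k, |f i.succ - f i.castSucc| = f (Fin.last k) - f 0) :
    ∀ i j : Fin (k+1), i ≤ j → f i ≤ f j := by
  have hz : ∑ i : Fin k, (|f i.succ - f i.castSucc| - (f i.succ - f i.castSucc)) = 0 := by
    rw [Finset.sum_sub_distrib, fin_telescope f, h, sub_self]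
  have hnn : ∀ i ∈ (Finset.univ : Finset (Fin k)), (0:ℝ) ≤ |f i.succ - f i.castSucc| - (f i.succ - f i.castSucc) :=
    fun i _ => by have := le_abs_self (f i.succ - f i.castSucc); linarith
  have hstep : ∀ i : Fin k, f i.castSucc ≤ f i.succ := by
    intro i
    have := (Finset.sum_eq_zero_iff_of_nonneg hnn).mp hz i (Finset.mem_univ i)
    have habs := le_abs_self (f i.succ - f i.castSucc)
    have : f i.succ - f i.castSucc = |f i.succ - f i.castSucc| := by linarith
    have := abs_nonneg (f i.succ - f i.castSucc)
    linarith [this]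
  have hmono : Monotone (extNat f) := by
    apply monotone_nat_of_le_succ
    intro n
    by_cases hn : n < k
    · have := hstep ⟨n, hn⟩
      have e1 : extNat f n = f (⟨n, hn⟩ : Fin k).castSucc := by
        unfold extNat; congr 1; exact Fin.ext (by simp [Fin.castSucc]; omega)
      have e2 : extNat f (n+1) = f (⟨n, hn⟩ : Fin k).succ := by
        unfold extNat; congr 1; exact Fin.ext (by simp [Fin.succ]; omega)
      rw [e1, e2]; exact this
    · have hmm : min n k = min (n+1) k := by omega
      unfold extNat
      exact le_of_eq (congrArg f (Fin.ext (by simp; omega)))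
  intro i j hij
  have := hmono (show i.1 ≤ j.1 from hij)
  rwa [extNat_eq f i, extNat_eq f j] at this

end FinTel

lemma euclen_axis {u v : Point} (h : axisAligned u v) :
    euclen u v = |u.1 - v.1| + |u.2 - v.2| := by
  rcases h with h | h
  · rw [euclen, h]
    simp [Real.sqrt_sq_eq_abs]
  · rw [euclen, h]
    simp [Real.sqrt_sq_eq_abs]

/-- key sum identities for an M-path -/
lemma mpath_sums {s t : Point} {π : GPath} (h : IsMPath s t π) :
    (∑ i : Fin π.k, |(π.pts i.succ).1 - (π.pts i.castSucc).1| = |t.1 - s.1|) ∧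
    (∑ i : Fin π.k, |(π.pts i.succ).2 - (π.pts i.castSucc).2| = |t.2 - s.2|) := by
  obtain ⟨h0, hlast, hax, hlen⟩ := h
  have hx := abs_tel (fun i => (π.pts i).1)
  have hy := abs_tel (fun i => (π.pts i).2)
  rw [h0, hlast] at hx hy
  have hsum : π.length = ∑ i : Fin π.k, (|(π.pts i.succ).1 - (π.pts i.castSucc).1| +
      |(π.pts i.succ).2 - (π.pts i.castSucc).2|) := by
    rw [GPath.length]
    apply Finset.sum_congr rfl
    intro i _
    rw [euclen_axis (hax i), abs_sub_comm ((π.pts i.castSucc).1) _, abs_sub_comm ((π.pts i.castSucc).2) _]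
  rw [hsum, Finset.sum_add_distrib, manh] at hlen
  have e1 : |t.1 - s.1| = |s.1 - t.1| := abs_sub_comm _ _
  have e2 : |t.2 - s.2| = |s.2 - t.2| := abs_sub_comm _ _
  constructor <;> [skip; skip] <;> linarith [hx, hy]

lemma mpath_mono_x {s t : Point} {π : GPath} (h : IsMPath s t π) (hst : s.1 ≤ t.1) :
    ∀ i j : Fin (π.k + 1), i ≤ j → (π.pts i).1 ≤ (π.pts j).1 := by
  have hs := (mpath_sums h).1
  have h0 := h.1; have hl := h.2.1
  apply mono_of_abs_tel
  rw [hs, h0, hl, abs_of_nonneg (by linarith)]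

lemma mpath_mono_y {s t : Point} {π : GPath} (h : IsMPath s t π) (hst : s.2 ≤ t.2) :
    ∀ i j : Fin (π.k + 1), i ≤ j → (π.pts i).2 ≤ (π.pts j).2 := by
  have hs := (mpath_sums h).2
  have h0 := h.1; have hl := h.2.1
  apply mono_of_abs_tel
  rw [hs, h0, hl, abs_of_nonneg (by linarith)]

lemma mpath_anti_y {s t : Point} {π : GPath} (h : IsMPath s t π) (hst : t.2 ≤ s.2) :
    ∀ i j : Fin (π.k + 1), i ≤ j → (π.pts j).2 ≤ (π.pts i).2 := by
  have hs := (mpath_sums h).2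
  have h0 := h.1; have hl := h.2.1
  have key := mono_of_abs_tel (fun i => -(π.pts i).2) (by
    have : ∀ i : Fin π.k, |(-(π.pts i.succ).2) - (-(π.pts i.castSucc).2)| =
        |(π.pts i.succ).2 - (π.pts i.castSucc).2| := by
      intro i; rw [show (-(π.pts i.succ).2) - (-(π.pts i.castSucc).2) =
        -((π.pts i.succ).2 - (π.pts i.castSucc).2) by ring, abs_neg]
    rw [Finset.sum_congr rfl (fun i _ => this i), hs]
    simp only [h0, hl]
    rw [abs_of_nonpos (by linarith)]
    ring)
  intro i j hij
  have := key i j hij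
  simpa using this

end GMMN
namespace GMMN

lemma edge_inj (π : GPath) : Function.Injective π.edge := by
  intro i j hij
  rw [GPath.edge, GPath.edge] at hij
  rcases Sym2.eq_iff.mp hij with ⟨e1, e2⟩ | ⟨e1, e2⟩
  · have := π.inj e1
    exact Fin.ext (by simpa [Fin.castSucc] using congrArg Fin.val this)
  · have h1 := congrArg Fin.val (π.inj e1)
    have h2 := congrArg Fin.val (π.inj e2)
    simp [Fin.castSucc, Fin.succ] at h1 h2
    omega

lemma edge_ne_pts (π : GPath) (i : Fin π.k) : π.pts i.castSucc ≠ π.pts i.succ := by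
  intro h
  have := congrArg Fin.val (π.inj h)
  simp [Fin.castSucc, Fin.succ] at this

/-- Upper bound: a flipped M-path and a regular M-path share at most
`max dx dy` in length. -/
lemma shared_le {s t p q : Point} {πl πv : GPath}
    (hl : IsMPath s t πl) (hv : IsMPath p q πv)
    (hst : s.1 ≤ t.1) (hts : t.2 ≤ s.2) (hpq : p ≤ q) :
    sharedLen πl πv ≤ max |p.1 - q.1| |p.2 - q.2| := by
  classical
  set E := πl.edges ∩ πv.edges with hE
  -- monotonicity facts
  have vmx := mpath_mono_x hv hpq.1
  have vmy := mpath_mono_y hv hpq.2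
  have lmx := mpath_mono_x hl hst
  have lay := mpath_anti_y hl hts
  have haxv := hv.2.2.1
  -- index sets on πv
  set I : Finset (Fin πv.k) := Finset.univ.filter (fun i => πv.edge i ∈ E) with hI
  set Ih : Finset (Fin πv.k) := I.filter (fun i => (πv.pts i.castSucc).2 = (πv.pts i.succ).2) with hIh
  set Iv : Finset (Fin πv.k) := I.filter (fun i => ¬((πv.pts i.castSucc).2 = (πv.pts i.succ).2)) with hIv
  have hE_img : E = I.image πv.edge := by
    ext e
    simp only [Finset.mem_image, hI, Finset.mem_filter, Finset.mem_univ, true_and]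
    constructor
    · intro he
      have : e ∈ πv.edges := (Finset.mem_inter.mp he).2
      obtain ⟨i, _, rfl⟩ := Finset.mem_image.mp this
      exact ⟨i, he, rfl⟩
    · rintro ⟨i, hi, rfl⟩; exact hi
  have hsum : sharedLen πl πv = ∑ i ∈ I, euclen (πv.pts i.castSucc) (πv.pts i.succ) := by
    rw [sharedLen, netLength, ← hE, hE_img, Finset.sum_image (fun a _ b _ h => edge_inj πv h)]
    rfl
  have hIsplit : I = Ih ∪ Iv := by
    rw [hIh, hIv, ← Finset.filter_or]
    simp [Finset.filter_true_of_mem, em]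
  have hIdisj : Disjoint Ih Iv := by
    rw [hIh, hIv]
    exact Finset.disjoint_filter_filter_not I I _
  -- step facts
  have step_lt_x : ∀ i ∈ Ih, (πv.pts i.castSucc).1 < (πv.pts i.succ).1 := by
    intro i hi
    rw [hIh, Finset.mem_filter] at hi
    have hle := vmx i.castSucc i.succ (by simp [Fin.le_def, Fin.castSucc, Fin.succ])
    rcases lt_or_eq_of_le hle with h | h
    · exact h
    · exact absurd (Prod.ext h hi.2) (edge_ne_pts πv i)
  have step_lt_y : ∀ i ∈ Iv, (πv.pts i.castSucc).2 < (πv.pts i.succ).2 := by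
    intro i hi
    rw [hIv, Finset.mem_filter] at hi
    have hle := vmy i.castSucc i.succ (by simp [Fin.le_def, Fin.castSucc, Fin.succ])
    rcases lt_or_eq_of_le hle with h | h
    · exact h
    · exact absurd h hi.2
  have step_eq_x : ∀ i ∈ Iv, (πv.pts i.castSucc).1 = (πv.pts i.succ).1 := by
    intro i hi
    rcases haxv i with h | h
    · exact h
    · rw [hIv, Finset.mem_filter] at hi; exact absurd h hi.2
  -- sum bounds
  have sumH : ∑ i ∈ Ih, euclen (πv.pts i.castSucc) (πv.pts i.succ) ≤ |p.1 - q.1| := by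
    have tel := fin_telescope (fun i => (πv.pts i).1)
    rw [hv.1, hv.2.1] at tel
    have habs : |p.1 - q.1| = q.1 - p.1 := by rw [abs_sub_comm, abs_of_nonneg (by linarith [hpq.1])]
    rw [habs, ← tel]
    have heq : ∀ i ∈ Ih, euclen (πv.pts i.castSucc) (πv.pts i.succ) =
        (πv.pts i.succ).1 - (πv.pts i.castSucc).1 := by
      intro i hi
      rw [hIh, Finset.mem_filter] at hi
      rw [euclen_axis (haxv i), hi.2]
      simp only [sub_self, abs_zero, add_zero]
      rw [abs_of_nonpos (by linarith [step_lt_x i (by rw [hIh, Finset.mem_filter]; exact hi)])]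
      ring
    rw [Finset.sum_congr rfl heq]
    apply Finset.sum_le_sum_of_subset_of_nonneg (Finset.subset_univ Ih)
    intro i _ _
    have := vmx i.castSucc i.succ (by simp [Fin.le_def, Fin.castSucc, Fin.succ])
    linarith
  have sumV : ∑ i ∈ Iv, euclen (πv.pts i.castSucc) (πv.pts i.succ) ≤ |p.2 - q.2| := by
    have tel := fin_telescope (fun i => (πv.pts i).2)
    rw [hv.1, hv.2.1] at tel
    have habs : |p.2 - q.2| = q.2 - p.2 := by rw [abs_sub_comm, abs_of_nonneg (by linarith [hpq.2])]
    rw [habs, ← tel]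
    have heq : ∀ i ∈ Iv, euclen (πv.pts i.castSucc) (πv.pts i.succ) =
        (πv.pts i.succ).2 - (πv.pts i.castSucc).2 := by
      intro i hi
      rw [euclen_axis (Or.inl (step_eq_x i hi) : axisAligned _ _)]
      rw [step_eq_x i hi]
      simp only [sub_self, abs_zero, zero_add]
      rw [abs_of_nonpos (by linarith [step_lt_y i hi])]
      ring
    rw [Finset.sum_congr rfl heq]
    apply Finset.sum_le_sum_of_subset_of_nonneg (Finset.subset_univ Iv)
    intro i _ _
    have := vmy i.castSucc i.succ (by simp [Fin.le_def, Fin.castSucc, Fin.succ])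
    linarith
  -- the exclusion: not both nonempty
  have hexcl : Ih = ∅ ∨ Iv = ∅ := by
    by_contra hc
    push_neg at hc
    obtain ⟨i, hi⟩ := hc.1
    obtain ⟨j, hj⟩ := hc.2
    -- data for the horizontal edge
    set A := πv.pts i.castSucc with hA
    set B := πv.pts i.succ with hB
    have hAB2 : A.2 = B.2 := by rw [hIh, Finset.mem_filter] at hi; exact hi.2
    have hAB1 : A.1 < B.1 := step_lt_x i hi
    set C := πv.pts j.castSucc with hC
    set D := πv.pts j.succ with hD
    have hCD1 : C.1 = D.1 := step_eq_x j hj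
    have hCD2 : C.2 < D.2 := step_lt_y j hj
    -- the edges also lie in πl
    have hiE : πv.edge i ∈ πl.edges := by
      rw [hIh, Finset.mem_filter, hI, Finset.mem_filter] at hi
      exact (Finset.mem_inter.mp hi.1.2).1
    have hjE : πv.edge j ∈ πl.edges := by
      rw [hIv, Finset.mem_filter, hI, Finset.mem_filter] at hj
      exact (Finset.mem_inter.mp hj.1.2).1
    obtain ⟨i', _, hi'⟩ := Finset.mem_image.mp hiE
    obtain ⟨j', _, hj'⟩ := Finset.mem_image.mp hjE
    -- orient the edges inside πl
    have hiorient : πl.pts i'.castSucc = A ∧ πl.pts i'.succ = B := by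
      rw [GPath.edge] at hi'
      rw [GPath.edge] at hi'
      rcases Sym2.eq_iff.mp hi' with ⟨e1, e2⟩ | ⟨e1, e2⟩
      · exact ⟨e1, e2⟩
      · exfalso
        have hx := lmx i'.castSucc i'.succ (by simp [Fin.le_def, Fin.castSucc, Fin.succ])
        rw [e1, e2] at hx
        linarith
    have hjorient : πl.pts j'.castSucc = D ∧ πl.pts j'.succ = C := by
      rw [GPath.edge] at hj'
      rw [GPath.edge] at hj'
      rcases Sym2.eq_iff.mp hj' with ⟨e1, e2⟩ | ⟨e1, e2⟩
      · exfalso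
        have hy := lay j'.castSucc j'.succ (by simp [Fin.le_def, Fin.castSucc, Fin.succ])
        rw [e1, e2] at hy
        linarith
      · exact ⟨e1, e2⟩
    -- trichotomies
    rcases lt_trichotomy i j with hij | hij | hij
    · -- B before C in πv : B ≤ C
      have hle : i.succ ≤ j.castSucc := by
        simp only [Fin.le_def, Fin.lt_def, Fin.castSucc, Fin.succ, Fin.castAdd, Fin.castLE] at hij ⊢
        omega
      have hBC1 : B.1 ≤ C.1 := vmx _ _ hle
      have hBC2 : B.2 ≤ C.2 := vmy _ _ hle
      rcases lt_trichotomy i' j' with hij' | hij' | hij'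
      · have hle' : i'.succ ≤ j'.castSucc := by
          simp only [Fin.le_def, Fin.lt_def, Fin.castSucc, Fin.succ, Fin.castAdd, Fin.castLE] at hij' ⊢
          omega
        have := lay _ _ hle'
        rw [hiorient.2, hjorient.1] at this
        linarith
      · have eAD : A = D := by rw [← hiorient.1, hij', hjorient.1]
        have eBC : B = C := by rw [← hiorient.2, hij', hjorient.2]
        rw [eAD, eBC] at hAB2
        linarith
      · have hle' : j'.succ ≤ i'.castSucc := by
          simp only [Fin.le_def, Fin.lt_def, Fin.castSucc, Fin.succ, Fin.castAdd, Fin.castLE] at hij' ⊢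
          omega
        have := lmx _ _ hle'
        rw [hjorient.2, hiorient.1] at this
        linarith
    · -- i = j : impossible
      have eAC : A = C := by rw [hA, hC, hij]
      have eBD : B = D := by rw [hB, hD, hij]
      rw [eAC, eBD] at hAB2
      linarith
    · -- D before A in πv : D ≤ A
      have hle : j.succ ≤ i.castSucc := by
        simp only [Fin.le_def, Fin.lt_def, Fin.castSucc, Fin.succ, Fin.castAdd, Fin.castLE] at hij ⊢
        omega
      have hDA1 : D.1 ≤ A.1 := vmx _ _ hle
      have hDA2 : D.2 ≤ A.2 := vmy _ _ hle
      rcases lt_trichotomy i' j' with hij' | hij' | hij'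
      · have hle' : i'.succ ≤ j'.castSucc := by
          simp only [Fin.le_def, Fin.lt_def, Fin.castSucc, Fin.succ, Fin.castAdd, Fin.castLE] at hij' ⊢
          omega
        have := lmx _ _ hle'
        rw [hiorient.2, hjorient.1] at this
        linarith
      · have eAD : A = D := by rw [← hiorient.1, hij', hjorient.1]
        have eBC : B = C := by rw [← hiorient.2, hij', hjorient.2]
        rw [eAD, eBC] at hAB2
        linarith
      · have hle' : j'.succ ≤ i'.castSucc := by
          simp only [Fin.le_def, Fin.lt_def, Fin.castSucc, Fin.succ, Fin.castAdd, Fin.castLE] at hij' ⊢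
          omega
        have := lay _ _ hle'
        rw [hjorient.2, hiorient.1] at this
        linarith
  -- conclude
  have hnn : ∀ i ∈ I, (0:ℝ) ≤ euclen (πv.pts i.castSucc) (πv.pts i.succ) := by
    intro i _
    exact Real.sqrt_nonneg _
  rw [hsum, hIsplit, Finset.sum_union hIdisj]
  rcases hexcl with h | h
  · rw [h]
    simp only [Finset.sum_empty, zero_add]
    exact le_trans sumV (le_max_right _ _)
  · rw [h]
    simp only [Finset.sum_empty, add_zero]
    exact le_trans sumH (le_max_left _ _)

end GMMN
namespace GMMN

def Xcoords (P : Inst) : Finset ℝ := (P.image fun v => v.1.1) ∪ (P.image fun v => v.2.1)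
def Ycoords (P : Inst) : Finset ℝ := (P.image fun v => v.1.2) ∪ (P.image fun v => v.2.2)

lemma mem_hananV {P : Inst} {z : Point} :
    z ∈ hananV P ↔ z.1 ∈ Xcoords P ∧ z.2 ∈ Ycoords P := by
  rw [hananV, Finset.mem_product]
  rfl

lemma isHananEdge_symm {P : Inst} {u v : Point} (h : IsHananEdge P u v) :
    IsHananEdge P v u := by
  obtain ⟨h1, h2, h3, h4, h5⟩ := h
  refine ⟨h2, h1, h3.symm, ?_, ?_⟩
  · rcases h4 with h | h
    · exact Or.inl h.symm
    · exact Or.inr h.symm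
  · intro z hz hbox
    rw [inBox, inf_comm, sup_comm] at hbox
    rcases h5 z hz hbox with h | h
    · exact Or.inr h
    · exact Or.inl h

lemma isHananEdge_horiz {P : Inst} {x1 x2 y : ℝ} (h1 : x1 ∈ Xcoords P) (h2 : x2 ∈ Xcoords P)
    (hy : y ∈ Ycoords P) (hlt : x1 < x2)
    (hbet : ∀ z ∈ Xcoords P, ¬(x1 < z ∧ z < x2)) :
    IsHananEdge P ((x1, y) : Point) ((x2, y) : Point) := by
  refine ⟨mem_hananV.mpr ⟨h1, hy⟩, mem_hananV.mpr ⟨h2, hy⟩, ?_, Or.inr rfl, ?_⟩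
  · intro h
    have := congrArg Prod.fst h
    simp at this
    linarith
  · intro z hz hbox
    obtain ⟨hlo, hhi⟩ := hbox
    have hlo1 : min x1 x2 ≤ z.1 := hlo.1
    have hhi1 : z.1 ≤ max x1 x2 := hhi.1
    have hlo2 : y ≤ z.2 := by simpa using hlo.2
    have hhi2 : z.2 ≤ y := by simpa using hhi.2
    have hz2 : z.2 = y := le_antisymm hhi2 hlo2
    rw [min_eq_left hlt.le] at hlo1
    rw [max_eq_right hlt.le] at hhi1
    have hz1 : z.1 = x1 ∨ z.1 = x2 := by
      rcases lt_trichotomy z.1 x1 with h | h | h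
      · linarith
      · exact Or.inl h
      rcases lt_trichotomy z.1 x2 with h' | h' | h'
      · exact absurd ⟨h, h'⟩ (hbet z.1 (mem_hananV.mp hz).1)
      · exact Or.inr h'
      · linarith
    rcases hz1 with h | h
    · exact Or.inl (Prod.ext h hz2)
    · exact Or.inr (Prod.ext h hz2)

lemma isHananEdge_vert {P : Inst} {y1 y2 x : ℝ} (h1 : y1 ∈ Ycoords P) (h2 : y2 ∈ Ycoords P)
    (hx : x ∈ Xcoords P) (hlt : y1 < y2)
    (hbet : ∀ z ∈ Ycoords P, ¬(y1 < z ∧ z < y2)) :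
    IsHananEdge P ((x, y1) : Point) ((x, y2) : Point) := by
  refine ⟨mem_hananV.mpr ⟨hx, h1⟩, mem_hananV.mpr ⟨hx, h2⟩, ?_, Or.inl rfl, ?_⟩
  · intro h
    have := congrArg Prod.snd h
    simp at this
    linarith
  · intro z hz hbox
    obtain ⟨hlo, hhi⟩ := hbox
    have hlo1 : min y1 y2 ≤ z.2 := hlo.2
    have hhi1 : z.2 ≤ max y1 y2 := hhi.2
    have hlo2 : x ≤ z.1 := by simpa using hlo.1
    have hhi2 : z.1 ≤ x := by simpa using hhi.1
    have hz2 : z.1 = x := le_antisymm hhi2 hlo2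
    rw [min_eq_left hlt.le] at hlo1
    rw [max_eq_right hlt.le] at hhi1
    have hz1 : z.2 = y1 ∨ z.2 = y2 := by
      rcases lt_trichotomy z.2 y1 with h | h | h
      · linarith
      · exact Or.inl h
      rcases lt_trichotomy z.2 y2 with h' | h' | h'
      · exact absurd ⟨h, h'⟩ (hbet z.2 (mem_hananV.mp hz).2)
      · exact Or.inr h'
      · linarith
    rcases hz1 with h | h
    · exact Or.inl (Prod.ext hz2 h)
    · exact Or.inr (Prod.ext hz2 h)

lemma getElem_congr_idx {α : Type*} {L : List α} {i j : ℕ} (h : i = j) (hi : i < L.length) :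
    L[i] = L[j]'(h ▸ hi) := by subst h; rfl

lemma mem_pairs_reverse {α : Type*} {L : List α} {pr : α × α} (h : pr ∈ pairs L.reverse) :
    (pr.2, pr.1) ∈ pairs L := by
  obtain ⟨j, hj, h1, h2⟩ := mem_pairs_iff_getElem.mp h
  rw [List.length_reverse] at hj
  apply mem_pairs_iff_getElem.mpr
  refine ⟨L.length - 2 - j, by omega, ?_, ?_⟩
  · rw [← h2, List.getElem_reverse]
    exact getElem_congr_idx (by omega) (by omega)
  · rw [← h1, List.getElem_reverse]
    exact getElem_congr_idx (by omega) (by omega)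

/-- every consecutive pair a Hanan edge implies grid & axis & mpath pieces -/
lemma onGrid_ofList {P : Inst} {L : List Point} (h : L ≠ []) (hnd : L.Nodup)
    (hall : ∀ pr ∈ pairs L, IsHananEdge P pr.1 pr.2) :
    OnGrid P (ofList L h hnd) := by
  intro i
  have hi : i.1 < L.length - 1 := i.2
  have hmem : ((L[i.1]'(by omega) : Point), (L[i.1+1]'(by omega) : Point)) ∈ pairs L :=
    mem_pairs_iff_getElem.mpr ⟨i.1, by omega, rfl, rfl⟩
  exact hall _ hmem

lemma isMPath_ofList {P : Inst} {L : List Point} {u v : Point} (h : L ≠ []) (hnd : L.Nodup)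
    (hall : ∀ pr ∈ pairs L, IsHananEdge P pr.1 pr.2)
    (hhead : L.head h = u) (hlast : L.getLast h = v)
    (hlen : listLen L = manh u v) :
    IsMPath u v (ofList L h hnd) := by
  refine ⟨by rw [ofList_pts_zero, hhead], by rw [ofList_pts_last, hlast], ?_, ?_⟩
  · intro i
    have hi : i.1 < L.length - 1 := i.2
    have hmem : ((L[i.1]'(by omega) : Point), (L[i.1+1]'(by omega) : Point)) ∈ pairs L :=
      mem_pairs_iff_getElem.mpr ⟨i.1, by omega, rfl, rfl⟩
    exact (hall _ hmem).2.2.2.1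
  · rw [ofList_length, hlen]

lemma sym2Len_nonneg (e : Sym2 Point) : 0 ≤ sym2Len e := by
  induction e using Sym2.ind with
  | _ a b => exact Real.sqrt_nonneg _

end GMMN
namespace GMMN

section Glue

variable {L1 L2 : List Point}

lemma glue_ne (h1 : L1 ≠ []) (h2 : L2 ≠ []) : L1 ++ L2.tail ≠ [] := by
  intro h
  rw [List.append_eq_nil_iff] at h
  exact h1 h.1

lemma glue_head (h1 : L1 ≠ []) (h2 : L2 ≠ []) :
    (L1 ++ L2.tail).head (glue_ne h1 h2) = L1.head h1 :=
  List.head_append_of_ne_nil h1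

lemma glue_last (h1 : L1 ≠ []) (h2 : L2 ≠ []) (hj : L1.getLast h1 = L2.head h2) :
    (L1 ++ L2.tail).getLast (glue_ne h1 h2) = L2.getLast h2 := by
  by_cases ht : L2.tail = []
  · rw [List.getLast_append]
    simp only [ht, List.isEmpty_nil, dite_true]
    match L2, h2, ht with
    | [c], _, _ => rw [hj]; rfl
  · rw [List.getLast_append_of_ne_nil (h₂ := ht)]
    match L2, h2, ht with
    | c :: r2, _, ht =>
      show r2.getLast ht = (c :: r2).getLast (by simp)
      exact (List.getLast_cons ht).symm

lemma glue_nodup (h2 : L2 ≠ []) (hnd1 : L1.Nodup) (hnd2 : L2.Nodup)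
    (hdisj : ∀ z ∈ L1, z ∈ L2 → z = L2.head h2) :
    (L1 ++ L2.tail).Nodup := by
  rw [List.nodup_append]
  refine ⟨hnd1, ?_, ?_⟩
  · match L2, hnd2 with
    | c :: r2, hnd2 => exact (List.nodup_cons.mp hnd2).2
  · intro z hz1 w hz2 hzw
    subst hzw
    have hz2' : z ∈ L2 := List.mem_of_mem_tail hz2
    have := hdisj z hz1 hz2'
    subst this
    match L2, h2, hnd2, hz2 with
    | c :: r2, _, hnd2, hz2 =>
      exact (List.nodup_cons.mp hnd2).1 hz2

lemma mem_glue {z : Point} (hz : z ∈ L1 ++ L2.tail) : z ∈ L1 ∨ z ∈ L2 := by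
  rcases List.mem_append.mp hz with h | h
  · exact Or.inl h
  · exact Or.inr (List.mem_of_mem_tail h)

end Glue

lemma shared_ge (π1 π2 : GPath) (F : Finset (Sym2 Point)) (hF1 : F ⊆ π1.edges)
    (hF2 : F ⊆ π2.edges) : ∑ e ∈ F, sym2Len e ≤ sharedLen π1 π2 := by
  apply Finset.sum_le_sum_of_subset_of_nonneg (Finset.subset_inter hF1 hF2)
  exact fun e _ _ => sym2Len_nonneg e

lemma hanan_pairs_runH {P : Inst} {a b y : ℝ} (hy : y ∈ Ycoords P) :
    ∀ pr ∈ pairs (runH (Xcoords P) a b y), IsHananEdge P pr.1 pr.2 := by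
  intro pr hpr
  obtain ⟨hy1, hy2, hm1, hm2, _, hlt, _, hbet⟩ := mem_pairs_runH.mp hpr
  have e1 : pr.1 = (pr.1.1, y) := by rw [← hy1]
  have e2 : pr.2 = (pr.2.1, y) := by rw [← hy2]
  rw [e1, e2]
  exact isHananEdge_horiz hm1 hm2 hy hlt hbet

lemma hanan_pairs_runV {P : Inst} {a b x : ℝ} (hx : x ∈ Xcoords P) :
    ∀ pr ∈ pairs (runV (Ycoords P) a b x), IsHananEdge P pr.1 pr.2 := by
  intro pr hpr
  obtain ⟨hx1, hx2, hm1, hm2, _, hlt, _, hbet⟩ := mem_pairs_runV.mp hpr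
  have e1 : pr.1 = (x, pr.1.2) := by rw [← hx1]
  have e2 : pr.2 = (x, pr.2.2) := by rw [← hx2]
  rw [e1, e2]
  exact isHananEdge_vert hm1 hm2 hx hlt hbet

lemma hanan_pairs_reverse {P : Inst} {L : List Point}
    (h : ∀ pr ∈ pairs L, IsHananEdge P pr.1 pr.2) :
    ∀ pr ∈ pairs L.reverse, IsHananEdge P pr.1 pr.2 := by
  intro pr hpr
  exact isHananEdge_symm (h _ (mem_pairs_reverse hpr))

end GMMN
namespace GMMN

lemma exists_case1 (P : Inst) (s t p q : Point)
    (hs : s ∈ hananV P) (ht : t ∈ hananV P) (hp : p ∈ hananV P) (hq : q ∈ hananV P)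
    (hsp : s.1 ≤ p.1) (hpq1 : p.1 ≤ q.1) (hqt : q.1 ≤ t.1)
    (htp : t.2 ≤ p.2) (hpq2 : p.2 ≤ q.2) (hqs : q.2 ≤ s.2) :
    ∃ πl πv : GPath, InPi P (s, t) πl ∧ InPi P (p, q) πv ∧
      q.1 - p.1 ≤ sharedLen πl πv := by
  classical
  obtain ⟨hs1, hs2⟩ := mem_hananV.mp hs
  obtain ⟨ht1, ht2⟩ := mem_hananV.mp ht
  obtain ⟨hp1, hp2⟩ := mem_hananV.mp hp
  obtain ⟨hq1, hq2⟩ := mem_hananV.mp hq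
  have hst1 : s.1 ≤ t.1 := by linarith
  have hts2 : t.2 ≤ s.2 := by linarith
  have hps2 : p.2 ≤ s.2 := by linarith
  have htq2 : t.2 ≤ q.2 := by linarith
  have hsq1 : s.1 ≤ q.1 := by linarith
  -- the path for (p, q) : right then up
  set H := runH (Xcoords P) p.1 q.1 p.2 with hH
  set V := runV (Ycoords P) p.2 q.2 q.1 with hV
  have hH_ne : H ≠ [] := runH_ne_nil hp1 hpq1
  have hV_ne : V ≠ [] := runV_ne_nil hp2 hpq2
  have hH_head : H.head hH_ne = (p.1, p.2) := head_runH hp1 hq1 hpq1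
  have hH_last : H.getLast hH_ne = (q.1, p.2) := getLast_runH hp1 hq1 hpq1
  have hV_head : V.head hV_ne = (q.1, p.2) := head_runV hp2 hq2 hpq2
  have hV_last : V.getLast hV_ne = (q.1, q.2) := getLast_runV hp2 hq2 hpq2
  have hjv : H.getLast hH_ne = V.head hV_ne := by rw [hH_last, hV_head]
  set Lv := H ++ V.tail with hLv
  have hLv_ne : Lv ≠ [] := glue_ne hH_ne hV_ne
  have hLv_nd : Lv.Nodup := by
    apply glue_nodup hV_ne (runH_nodup : H.Nodup) (runV_nodup : V.Nodup)
    intro z hz1 hz2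
    rw [hV_head]
    obtain ⟨_, _, _, hz12⟩ := mem_runH.mp hz1
    obtain ⟨_, _, _, hz21⟩ := mem_runV.mp hz2
    exact Prod.ext hz21 hz12
  have hLv_pairs : pairs Lv = pairs H ++ pairs V := pairs_append_tail H V hH_ne hV_ne hjv
  have hLv_hanan : ∀ pr ∈ pairs Lv, IsHananEdge P pr.1 pr.2 := by
    intro pr hpr
    rw [hLv_pairs, List.mem_append] at hpr
    rcases hpr with h | h
    · exact hanan_pairs_runH hp2 pr h
    · exact hanan_pairs_runV hq1 pr h
  set πv := ofList Lv hLv_ne hLv_nd with hπv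
  have hπv_mp : IsMPath p q πv := by
    apply isMPath_ofList hLv_ne hLv_nd hLv_hanan
    · exact (glue_head hH_ne hV_ne).trans (hH_head.trans Prod.mk.eta)
    · exact (glue_last hH_ne hV_ne hjv).trans (hV_last.trans Prod.mk.eta)
    · have e1 : listLen Lv = listLen H + listLen V :=
        listLen_append_tail H V hH_ne hV_ne hjv
      have e2 : listLen H = q.1 - p.1 := listLen_runH hp1 hq1 hpq1
      have e3 : listLen V = q.2 - p.2 := listLen_runV hp2 hq2 hpq2
      rw [e1, e2, e3, manh, abs_sub_comm p.1 q.1, abs_sub_comm p.2 q.2,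
        abs_of_nonneg (by linarith : (0:ℝ) ≤ q.1 - p.1),
        abs_of_nonneg (by linarith : (0:ℝ) ≤ q.2 - p.2)]
  -- the path for (s, t) : down, right, down, right
  set R1 := (runV (Ycoords P) p.2 s.2 s.1).reverse with hR1
  set R2 := runH (Xcoords P) s.1 q.1 p.2 with hR2
  set R3 := (runV (Ycoords P) t.2 p.2 q.1).reverse with hR3
  set R4 := runH (Xcoords P) q.1 t.1 t.2 with hR4
  have hR1_ne : R1 ≠ [] := by
    rw [hR1]; simp [runV_ne_nil hp2 hps2]
  have hR2_ne : R2 ≠ [] := runH_ne_nil hs1 hsq1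
  have hR3_ne : R3 ≠ [] := by
    rw [hR3]; simp [runV_ne_nil ht2 htp]
  have hR4_ne : R4 ≠ [] := runH_ne_nil hq1 hqt
  have hR1_head : R1.head hR1_ne = (s.1, s.2) :=
    (List.head_reverse hR1_ne).trans (getLast_runV hp2 hs2 hps2)
  have hR1_last : R1.getLast hR1_ne = (s.1, p.2) :=
    (List.getLast_reverse hR1_ne).trans (head_runV hp2 hs2 hps2)
  have hR2_head : R2.head hR2_ne = (s.1, p.2) := head_runH hs1 hq1 hsq1
  have hR2_last : R2.getLast hR2_ne = (q.1, p.2) := getLast_runH hs1 hq1 hsq1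
  have hR3_head : R3.head hR3_ne = (q.1, p.2) :=
    (List.head_reverse hR3_ne).trans (getLast_runV ht2 hp2 htp)
  have hR3_last : R3.getLast hR3_ne = (q.1, t.2) :=
    (List.getLast_reverse hR3_ne).trans (head_runV ht2 hp2 htp)
  have hR4_head : R4.head hR4_ne = (q.1, t.2) := head_runH hq1 ht1 hqt
  have hR4_last : R4.getLast hR4_ne = (t.1, t.2) := getLast_runH hq1 ht1 hqt
  have memR1 : ∀ z : Point, z ∈ R1 → z.1 = s.1 ∧ p.2 ≤ z.2 ∧ z.2 ≤ s.2 := by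
    intro z hz
    rw [hR1, List.mem_reverse] at hz
    obtain ⟨_, h2, h3, h4⟩ := mem_runV.mp hz
    exact ⟨h4, h2, h3⟩
  have memR2 : ∀ z : Point, z ∈ R2 → z.2 = p.2 ∧ s.1 ≤ z.1 ∧ z.1 ≤ q.1 := by
    intro z hz
    obtain ⟨_, h2, h3, h4⟩ := mem_runH.mp hz
    exact ⟨h4, h2, h3⟩
  have memR3 : ∀ z : Point, z ∈ R3 → z.1 = q.1 ∧ t.2 ≤ z.2 ∧ z.2 ≤ p.2 := by
    intro z hz
    rw [hR3, List.mem_reverse] at hz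
    obtain ⟨_, h2, h3, h4⟩ := mem_runV.mp hz
    exact ⟨h4, h2, h3⟩
  have memR4 : ∀ z : Point, z ∈ R4 → z.2 = t.2 ∧ q.1 ≤ z.1 ∧ z.1 ≤ t.1 := by
    intro z hz
    obtain ⟨_, h2, h3, h4⟩ := mem_runH.mp hz
    exact ⟨h4, h2, h3⟩
  have hR1_nd : R1.Nodup := by
    rw [hR1]; exact List.nodup_reverse.mpr runV_nodup
  have hR3_nd : R3.Nodup := by
    rw [hR3]; exact List.nodup_reverse.mpr runV_nodup
  -- glue R3 R4
  set L34 := R3 ++ R4.tail with hL34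
  have hj34 : R3.getLast hR3_ne = R4.head hR4_ne := by rw [hR3_last, hR4_head]
  have hL34_ne : L34 ≠ [] := glue_ne hR3_ne hR4_ne
  have hL34_nd : L34.Nodup := by
    apply glue_nodup hR4_ne hR3_nd (runH_nodup : R4.Nodup)
    intro z hz1 hz2
    rw [hR4_head]
    obtain ⟨hza, hzb, hzc⟩ := memR3 z hz1
    obtain ⟨hwa, hwb, hwc⟩ := memR4 z hz2
    exact Prod.ext hza hwa
  have hL34_head : L34.head hL34_ne = (q.1, p.2) :=
    (glue_head hR3_ne hR4_ne).trans hR3_head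
  have hL34_last : L34.getLast hL34_ne = (t.1, t.2) :=
    (glue_last hR3_ne hR4_ne hj34).trans hR4_last
  have hL34_pairs : pairs L34 = pairs R3 ++ pairs R4 := pairs_append_tail R3 R4 hR3_ne hR4_ne hj34
  have memL34 : ∀ z : Point, z ∈ L34 → z ∈ R3 ∨ z ∈ R4 := fun z hz => mem_glue hz
  -- glue R2 (R3 R4)
  set L234 := R2 ++ L34.tail with hL234
  have hj234 : R2.getLast hR2_ne = L34.head hL34_ne := by rw [hR2_last, hL34_head]
  have hL234_ne : L234 ≠ [] := glue_ne hR2_ne hL34_ne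
  have hL234_nd : L234.Nodup := by
    apply glue_nodup hL34_ne (runH_nodup : R2.Nodup) hL34_nd
    intro z hz1 hz2
    rw [hL34_head]
    obtain ⟨hza, hzb, hzc⟩ := memR2 z hz1
    rcases memL34 z hz2 with h | h
    · exact Prod.ext (memR3 z h).1 hza
    · obtain ⟨hwa, hwb, hwc⟩ := memR4 z h
      exact Prod.ext (by linarith) hza
  have hL234_head : L234.head hL234_ne = (s.1, p.2) :=
    (glue_head hR2_ne hL34_ne).trans hR2_head
  have hL234_last : L234.getLast hL234_ne = (t.1, t.2) :=
    (glue_last hR2_ne hL34_ne hj234).trans hL34_last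
  have hL234_pairs : pairs L234 = pairs R2 ++ pairs L34 :=
    pairs_append_tail R2 L34 hR2_ne hL34_ne hj234
  have memL234 : ∀ z : Point, z ∈ L234 → z ∈ R2 ∨ z ∈ R3 ∨ z ∈ R4 := by
    intro z hz
    rcases mem_glue hz with h | h
    · exact Or.inl h
    · exact Or.inr (memL34 z h)
  -- glue R1 rest
  set Ll := R1 ++ L234.tail with hLl
  have hj1 : R1.getLast hR1_ne = L234.head hL234_ne := by rw [hR1_last, hL234_head]
  have hLl_ne : Ll ≠ [] := glue_ne hR1_ne hL234_ne
  have hLl_nd : Ll.Nodup := by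
    apply glue_nodup hL234_ne hR1_nd hL234_nd
    intro z hz1 hz2
    rw [hL234_head]
    obtain ⟨hza, hzb, hzc⟩ := memR1 z hz1
    rcases memL234 z hz2 with h | h | h
    · exact Prod.ext hza (memR2 z h).1
    · obtain ⟨hwa, hwb, hwc⟩ := memR3 z h
      have : z.1 = q.1 := hwa
      have hq1s : q.1 ≤ s.1 := by rw [← hza, this]
      exact Prod.ext hza (by linarith)
    · obtain ⟨hwa, hwb, hwc⟩ := memR4 z h
      have hq1s : q.1 ≤ s.1 := by linarith [hzb, hwb, hza ▸ hwb]
      exact Prod.ext hza (by linarith)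
  have hLl_head : Ll.head hLl_ne = (s.1, s.2) :=
    (glue_head hR1_ne hL234_ne).trans hR1_head
  have hLl_last : Ll.getLast hLl_ne = (t.1, t.2) :=
    (glue_last hR1_ne hL234_ne hj1).trans hL234_last
  have hLl_pairs : pairs Ll = pairs R1 ++ (pairs R2 ++ (pairs R3 ++ pairs R4)) := by
    rw [hLl, pairs_append_tail R1 L234 hR1_ne hL234_ne hj1, hL234_pairs, hL34_pairs]
  have hLl_hanan : ∀ pr ∈ pairs Ll, IsHananEdge P pr.1 pr.2 := by
    intro pr hpr
    rw [hLl_pairs] at hpr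
    simp only [List.mem_append] at hpr
    rcases hpr with h | h | h | h
    · exact hanan_pairs_reverse (hanan_pairs_runV hs1) pr h
    · exact hanan_pairs_runH hp2 pr h
    · exact hanan_pairs_reverse (hanan_pairs_runV hq1) pr h
    · exact hanan_pairs_runH ht2 pr h
  set πl := ofList Ll hLl_ne hLl_nd with hπl
  have hπl_mp : IsMPath s t πl := by
    apply isMPath_ofList hLl_ne hLl_nd hLl_hanan
    · exact hLl_head.trans Prod.mk.eta
    · exact hLl_last.trans Prod.mk.eta
    · have e1 : listLen Ll = listLen R1 + listLen L234 :=
        listLen_append_tail R1 L234 hR1_ne hL234_ne hj1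
      have e2 : listLen L234 = listLen R2 + listLen L34 :=
        listLen_append_tail R2 L34 hR2_ne hL34_ne hj234
      have e3 : listLen L34 = listLen R3 + listLen R4 :=
        listLen_append_tail R3 R4 hR3_ne hR4_ne hj34
      have e4 : listLen R1 = s.2 - p.2 := (listLen_reverse _).trans (listLen_runV hp2 hs2 hps2)
      have e5 : listLen R2 = q.1 - s.1 := listLen_runH hs1 hq1 hsq1
      have e6 : listLen R3 = p.2 - t.2 := (listLen_reverse _).trans (listLen_runV ht2 hp2 htp)
      have e7 : listLen R4 = t.1 - q.1 := listLen_runH hq1 ht1 hqt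
      rw [e1, e2, e3, e4, e5, e6, e7, manh,
        abs_of_nonpos (by linarith : s.1 - t.1 ≤ 0),
        abs_of_nonneg (by linarith : (0:ℝ) ≤ s.2 - t.2)]
      ring
  -- conclusion
  refine ⟨πl, πv, ⟨hπl_mp, onGrid_ofList hLl_ne hLl_nd hLl_hanan⟩,
    ⟨hπv_mp, onGrid_ofList hLv_ne hLv_nd hLv_hanan⟩, ?_⟩
  have hv_edges : πv.edges = (edgesOf H ++ edgesOf V).toFinset :=
    (ofList_edges Lv hLv_ne hLv_nd).trans
      (congrArg List.toFinset (edgesOf_append_tail H V hH_ne hV_ne hjv))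
  have hl_edges : πl.edges = (edgesOf Ll).toFinset := ofList_edges Ll hLl_ne hLl_nd
  have hF1 : (edgesOf H).toFinset ⊆ πv.edges := by
    rw [hv_edges]
    intro e he
    rw [List.mem_toFinset] at he ⊢
    exact List.mem_append.mpr (Or.inl he)
  have hF2 : (edgesOf H).toFinset ⊆ πl.edges := by
    rw [hl_edges]
    intro e he
    rw [List.mem_toFinset] at he ⊢
    simp only [edgesOf, List.mem_map] at he
    obtain ⟨pr, hpr, rfl⟩ := he
    obtain ⟨ha1, ha2, ha3, ha4, ha5, ha6, ha7, ha8⟩ :=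
      mem_pairs_runH.mp (hpr : pr ∈ pairs (runH (Xcoords P) p.1 q.1 p.2))
    have hpr2 : pr ∈ pairs R2 :=
      (mem_pairs_runH.mpr ⟨ha1, ha2, ha3, ha4, by linarith, ha6, ha7, ha8⟩ :
        pr ∈ pairs (runH (Xcoords P) s.1 q.1 p.2))
    show s(pr.1, pr.2) ∈ edgesOf Ll
    rw [show edgesOf Ll = (pairs Ll).map (fun pr => s(pr.1, pr.2)) from rfl, hLl_pairs]
    simp only [List.map_append, List.mem_append, List.mem_map]
    exact Or.inr (Or.inl ⟨pr, hpr2, rfl⟩)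
  have hsum : ∑ e ∈ (edgesOf H).toFinset, sym2Len e = q.1 - p.1 := by
    rw [List.sum_toFinset _ (nodup_edgesOf (runH_nodup : H.Nodup))]
    show listLen H = q.1 - p.1
    exact listLen_runH hp1 hq1 hpq1
  calc q.1 - p.1 = ∑ e ∈ (edgesOf H).toFinset, sym2Len e := hsum.symm
    _ ≤ sharedLen πl πv := shared_ge πl πv _ hF2 hF1

end GMMN
namespace GMMN

lemma exists_case2 (P : Inst) (s t p q : Point)
    (hs : s ∈ hananV P) (ht : t ∈ hananV P) (hp : p ∈ hananV P) (hq : q ∈ hananV P)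
    (hsp : s.1 ≤ p.1) (hpq1 : p.1 ≤ q.1) (hqt : q.1 ≤ t.1)
    (htp : t.2 ≤ p.2) (hpq2 : p.2 ≤ q.2) (hqs : q.2 ≤ s.2) :
    ∃ πl πv : GPath, InPi P (s, t) πl ∧ InPi P (p, q) πv ∧
      q.2 - p.2 ≤ sharedLen πl πv := by
  classical
  obtain ⟨hs1, hs2⟩ := mem_hananV.mp hs
  obtain ⟨ht1, ht2⟩ := mem_hananV.mp ht
  obtain ⟨hp1, hp2⟩ := mem_hananV.mp hp
  obtain ⟨hq1, hq2⟩ := mem_hananV.mp hq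
  have hst1 : s.1 ≤ t.1 := by linarith
  have hts2 : t.2 ≤ s.2 := by linarith
  have hps2 : p.2 ≤ s.2 := by linarith
  have htq2 : t.2 ≤ q.2 := by linarith
  have hpt1 : p.1 ≤ t.1 := by linarith
  -- the path for (p, q) : up then right
  set V := runV (Ycoords P) p.2 q.2 p.1 with hV
  set H := runH (Xcoords P) p.1 q.1 q.2 with hH
  have hV_ne : V ≠ [] := runV_ne_nil hp2 hpq2
  have hH_ne : H ≠ [] := runH_ne_nil hp1 hpq1
  have hV_head : V.head hV_ne = (p.1, p.2) := head_runV hp2 hq2 hpq2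
  have hV_last : V.getLast hV_ne = (p.1, q.2) := getLast_runV hp2 hq2 hpq2
  have hH_head : H.head hH_ne = (p.1, q.2) := head_runH hp1 hq1 hpq1
  have hH_last : H.getLast hH_ne = (q.1, q.2) := getLast_runH hp1 hq1 hpq1
  have hjv : V.getLast hV_ne = H.head hH_ne := by rw [hV_last, hH_head]
  set Lv := V ++ H.tail with hLv
  have hLv_ne : Lv ≠ [] := glue_ne hV_ne hH_ne
  have hLv_nd : Lv.Nodup := by
    apply glue_nodup hH_ne (runV_nodup : V.Nodup) (runH_nodup : H.Nodup)
    intro z hz1 hz2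
    rw [hH_head]
    obtain ⟨_, _, _, hz11⟩ := mem_runV.mp hz1
    obtain ⟨_, _, _, hz22⟩ := mem_runH.mp hz2
    exact Prod.ext hz11 hz22
  have hLv_pairs : pairs Lv = pairs V ++ pairs H := pairs_append_tail V H hV_ne hH_ne hjv
  have hLv_hanan : ∀ pr ∈ pairs Lv, IsHananEdge P pr.1 pr.2 := by
    intro pr hpr
    rw [hLv_pairs, List.mem_append] at hpr
    rcases hpr with h | h
    · exact hanan_pairs_runV hp1 pr h
    · exact hanan_pairs_runH hq2 pr h
  set πv := ofList Lv hLv_ne hLv_nd with hπv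
  have hπv_mp : IsMPath p q πv := by
    apply isMPath_ofList hLv_ne hLv_nd hLv_hanan
    · exact (glue_head hV_ne hH_ne).trans (hV_head.trans Prod.mk.eta)
    · exact (glue_last hV_ne hH_ne hjv).trans (hH_last.trans Prod.mk.eta)
    · have e1 : listLen Lv = listLen V + listLen H :=
        listLen_append_tail V H hV_ne hH_ne hjv
      have e2 : listLen V = q.2 - p.2 := listLen_runV hp2 hq2 hpq2
      have e3 : listLen H = q.1 - p.1 := listLen_runH hp1 hq1 hpq1
      rw [e1, e2, e3, manh, abs_sub_comm p.1 q.1, abs_sub_comm p.2 q.2,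
        abs_of_nonneg (by linarith : (0:ℝ) ≤ q.1 - p.1),
        abs_of_nonneg (by linarith : (0:ℝ) ≤ q.2 - p.2)]
      ring
  -- the path for (s, t) : right, down, right
  set R1 := runH (Xcoords P) s.1 p.1 s.2 with hR1
  set R2 := (runV (Ycoords P) t.2 s.2 p.1).reverse with hR2
  set R3 := runH (Xcoords P) p.1 t.1 t.2 with hR3
  have hR1_ne : R1 ≠ [] := runH_ne_nil hs1 hsp
  have hR2_ne : R2 ≠ [] := by
    rw [hR2]; simp [runV_ne_nil ht2 hts2]
  have hR3_ne : R3 ≠ [] := runH_ne_nil hp1 hpt1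
  have hR1_head : R1.head hR1_ne = (s.1, s.2) := head_runH hs1 hp1 hsp
  have hR1_last : R1.getLast hR1_ne = (p.1, s.2) := getLast_runH hs1 hp1 hsp
  have hR2_head : R2.head hR2_ne = (p.1, s.2) :=
    (List.head_reverse hR2_ne).trans (getLast_runV ht2 hs2 hts2)
  have hR2_last : R2.getLast hR2_ne = (p.1, t.2) :=
    (List.getLast_reverse hR2_ne).trans (head_runV ht2 hs2 hts2)
  have hR3_head : R3.head hR3_ne = (p.1, t.2) := head_runH hp1 ht1 hpt1
  have hR3_last : R3.getLast hR3_ne = (t.1, t.2) := getLast_runH hp1 ht1 hpt1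
  have memR1 : ∀ z : Point, z ∈ R1 → z.2 = s.2 ∧ s.1 ≤ z.1 ∧ z.1 ≤ p.1 := by
    intro z hz
    obtain ⟨_, h2, h3, h4⟩ := mem_runH.mp hz
    exact ⟨h4, h2, h3⟩
  have memR2 : ∀ z : Point, z ∈ R2 → z.1 = p.1 ∧ t.2 ≤ z.2 ∧ z.2 ≤ s.2 := by
    intro z hz
    rw [hR2, List.mem_reverse] at hz
    obtain ⟨_, h2, h3, h4⟩ := mem_runV.mp hz
    exact ⟨h4, h2, h3⟩
  have memR3 : ∀ z : Point, z ∈ R3 → z.2 = t.2 ∧ p.1 ≤ z.1 ∧ z.1 ≤ t.1 := by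
    intro z hz
    obtain ⟨_, h2, h3, h4⟩ := mem_runH.mp hz
    exact ⟨h4, h2, h3⟩
  have hR2_nd : R2.Nodup := by
    rw [hR2]; exact List.nodup_reverse.mpr runV_nodup
  -- glue R2 R3
  set L23 := R2 ++ R3.tail with hL23
  have hj23 : R2.getLast hR2_ne = R3.head hR3_ne := by rw [hR2_last, hR3_head]
  have hL23_ne : L23 ≠ [] := glue_ne hR2_ne hR3_ne
  have hL23_nd : L23.Nodup := by
    apply glue_nodup hR3_ne hR2_nd (runH_nodup : R3.Nodup)
    intro z hz1 hz2
    rw [hR3_head]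
    exact Prod.ext (memR2 z hz1).1 (memR3 z hz2).1
  have hL23_head : L23.head hL23_ne = (p.1, s.2) :=
    (glue_head hR2_ne hR3_ne).trans hR2_head
  have hL23_last : L23.getLast hL23_ne = (t.1, t.2) :=
    (glue_last hR2_ne hR3_ne hj23).trans hR3_last
  have hL23_pairs : pairs L23 = pairs R2 ++ pairs R3 := pairs_append_tail R2 R3 hR2_ne hR3_ne hj23
  have memL23 : ∀ z : Point, z ∈ L23 → z ∈ R2 ∨ z ∈ R3 := fun z hz => mem_glue hz
  -- glue R1 rest
  set Ll := R1 ++ L23.tail with hLl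
  have hj1 : R1.getLast hR1_ne = L23.head hL23_ne := by rw [hR1_last, hL23_head]
  have hLl_ne : Ll ≠ [] := glue_ne hR1_ne hL23_ne
  have hLl_nd : Ll.Nodup := by
    apply glue_nodup hL23_ne (runH_nodup : R1.Nodup) hL23_nd
    intro z hz1 hz2
    rw [hL23_head]
    obtain ⟨hza, hzb, hzc⟩ := memR1 z hz1
    rcases memL23 z hz2 with h | h
    · exact Prod.ext (memR2 z h).1 hza
    · obtain ⟨hwa, hwb, hwc⟩ := memR3 z h
      exact Prod.ext (by linarith) hza
  have hLl_head : Ll.head hLl_ne = (s.1, s.2) :=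
    (glue_head hR1_ne hL23_ne).trans hR1_head
  have hLl_last : Ll.getLast hLl_ne = (t.1, t.2) :=
    (glue_last hR1_ne hL23_ne hj1).trans hL23_last
  have hLl_pairs : pairs Ll = pairs R1 ++ (pairs R2 ++ pairs R3) := by
    rw [hLl, pairs_append_tail R1 L23 hR1_ne hL23_ne hj1, hL23_pairs]
  have hLl_hanan : ∀ pr ∈ pairs Ll, IsHananEdge P pr.1 pr.2 := by
    intro pr hpr
    rw [hLl_pairs] at hpr
    simp only [List.mem_append] at hpr
    rcases hpr with h | h | h
    · exact hanan_pairs_runH hs2 pr h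
    · exact hanan_pairs_reverse (hanan_pairs_runV hp1) pr h
    · exact hanan_pairs_runH ht2 pr h
  set πl := ofList Ll hLl_ne hLl_nd with hπl
  have hπl_mp : IsMPath s t πl := by
    apply isMPath_ofList hLl_ne hLl_nd hLl_hanan
    · exact hLl_head.trans Prod.mk.eta
    · exact hLl_last.trans Prod.mk.eta
    · have e1 : listLen Ll = listLen R1 + listLen L23 :=
        listLen_append_tail R1 L23 hR1_ne hL23_ne hj1
      have e2 : listLen L23 = listLen R2 + listLen R3 :=
        listLen_append_tail R2 R3 hR2_ne hR3_ne hj23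
      have e3 : listLen R1 = p.1 - s.1 := listLen_runH hs1 hp1 hsp
      have e4 : listLen R2 = s.2 - t.2 := (listLen_reverse _).trans (listLen_runV ht2 hs2 hts2)
      have e5 : listLen R3 = t.1 - p.1 := listLen_runH hp1 ht1 hpt1
      rw [e1, e2, e3, e4, e5, manh,
        abs_of_nonpos (by linarith : s.1 - t.1 ≤ 0),
        abs_of_nonneg (by linarith : (0:ℝ) ≤ s.2 - t.2)]
      ring
  -- conclusion
  refine ⟨πl, πv, ⟨hπl_mp, onGrid_ofList hLl_ne hLl_nd hLl_hanan⟩,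
    ⟨hπv_mp, onGrid_ofList hLv_ne hLv_nd hLv_hanan⟩, ?_⟩
  have hv_edges : πv.edges = (edgesOf V ++ edgesOf H).toFinset :=
    (ofList_edges Lv hLv_ne hLv_nd).trans
      (congrArg List.toFinset (edgesOf_append_tail V H hV_ne hH_ne hjv))
  have hl_edges : πl.edges = (edgesOf Ll).toFinset := ofList_edges Ll hLl_ne hLl_nd
  have hLl_edges : edgesOf Ll = edgesOf R1 ++ (edgesOf R2 ++ edgesOf R3) := by
    rw [show edgesOf Ll = (pairs Ll).map (fun pr => s(pr.1, pr.2)) from rfl, hLl_pairs]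
    simp [edgesOf]
  have hF1 : (edgesOf V).toFinset ⊆ πv.edges := by
    rw [hv_edges]
    intro e he
    rw [List.mem_toFinset] at he ⊢
    exact List.mem_append.mpr (Or.inl he)
  have hF2 : (edgesOf V).toFinset ⊆ πl.edges := by
    rw [hl_edges]
    intro e he
    rw [List.mem_toFinset] at he ⊢
    simp only [edgesOf, List.mem_map] at he
    obtain ⟨pr, hpr, rfl⟩ := he
    obtain ⟨ha1, ha2, ha3, ha4, ha5, ha6, ha7, ha8⟩ :=
      mem_pairs_runV.mp (hpr : pr ∈ pairs (runV (Ycoords P) p.2 q.2 p.1))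
    have hpr2 : pr ∈ pairs (runV (Ycoords P) t.2 s.2 p.1) :=
      mem_pairs_runV.mpr ⟨ha1, ha2, ha3, ha4, by linarith, ha6, by linarith, ha8⟩
    have hmem2 : s(pr.1, pr.2) ∈ edgesOf R2 := by
      rw [show edgesOf R2 = (edgesOf (runV (Ycoords P) t.2 s.2 p.1)).reverse from
        edgesOf_reverse _, List.mem_reverse]
      exact List.mem_map.mpr ⟨pr, hpr2, rfl⟩
    rw [hLl_edges]
    simp only [List.mem_append]
    exact Or.inr (Or.inl hmem2)
  have hsum : ∑ e ∈ (edgesOf V).toFinset, sym2Len e = q.2 - p.2 := by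
    rw [List.sum_toFinset _ (nodup_edgesOf (runV_nodup : V.Nodup))]
    show listLen V = q.2 - p.2
    exact listLen_runV hp2 hq2 hpq2
  calc q.2 - p.2 = ∑ e ∈ (edgesOf V).toFinset, sym2Len e := hsum.symm
    _ ≤ sharedLen πl πv := shared_ge πl πv _ hF2 hF1

end GMMN

open GMMN

/-- Lemma 3.1(2): for a flipped pair `l ∈ P` and Hanan-grid vertices `p ≤ q` in `B(l)`,
the maximum length of segments shared by an M-path for `l` and an M-path for `(p, q)`
equals `max{d_x(p, q), d_y(p, q)}`. -/
theorem sharable_length_flipped (P : Inst) (l : Point × Point) (hl : l ∈ P)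
    (hfl : Flipped l) (p q : Point)
    (hp : p ∈ hananV P) (hq : q ∈ hananV P)
    (hpB : inBox l.1 l.2 p) (hqB : inBox l.1 l.2 q) (hpq : p ≤ q) :
    IsGreatest {x : ℝ | ∃ πl πv : GPath, InPi P l πl ∧ InPi P (p, q) πv ∧
      x = sharedLen πl πv} (max |p.1 - q.1| |p.2 - q.2|) := by
  classical
  obtain ⟨hfl1, hfl2⟩ := hfl
  have hs : l.1 ∈ hananV P := by
    apply mem_hananV.mpr
    constructor
    · exact Finset.mem_union_left _ (Finset.mem_image.mpr ⟨l, hl, rfl⟩)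
    · exact Finset.mem_union_left _ (Finset.mem_image.mpr ⟨l, hl, rfl⟩)
  have ht : l.2 ∈ hananV P := by
    apply mem_hananV.mpr
    constructor
    · exact Finset.mem_union_right _ (Finset.mem_image.mpr ⟨l, hl, rfl⟩)
    · exact Finset.mem_union_right _ (Finset.mem_image.mpr ⟨l, hl, rfl⟩)
  have box : ∀ z : Point, inBox l.1 l.2 z →
      l.1.1 ≤ z.1 ∧ z.1 ≤ l.2.1 ∧ l.2.2 ≤ z.2 ∧ z.2 ≤ l.1.2 := by
    intro z hz
    obtain ⟨hlo, hhi⟩ := hz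
    have h1 : l.1.1 ⊓ l.2.1 ≤ z.1 := hlo.1
    have h2 : l.1.2 ⊓ l.2.2 ≤ z.2 := hlo.2
    have h3 : z.1 ≤ l.1.1 ⊔ l.2.1 := hhi.1
    have h4 : z.2 ≤ l.1.2 ⊔ l.2.2 := hhi.2
    rw [inf_eq_left.mpr hfl1] at h1
    rw [inf_eq_right.mpr hfl2] at h2
    rw [sup_eq_right.mpr hfl1] at h3
    rw [sup_eq_left.mpr hfl2] at h4
    exact ⟨h1, h3, h2, h4⟩
  obtain ⟨hsp, hpt, htp, hps⟩ := box p hpB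
  obtain ⟨hsq, hqt, htq, hqs⟩ := box q hqB
  have hpq1 : p.1 ≤ q.1 := hpq.1
  have hpq2 : p.2 ≤ q.2 := hpq.2
  have habs1 : |p.1 - q.1| = q.1 - p.1 := by
    rw [abs_sub_comm, abs_of_nonneg (by linarith)]
  have habs2 : |p.2 - q.2| = q.2 - p.2 := by
    rw [abs_sub_comm, abs_of_nonneg (by linarith)]
  constructor
  · -- membership
    rcases le_total (q.2 - p.2) (q.1 - p.1) with hcase | hcase
    · obtain ⟨πl, πv, h1, h2, h3⟩ :=
        exists_case1 P l.1 l.2 p q hs ht hp hq hsp hpq1 hqt htp hpq2 hqs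
      have h1' : InPi P l πl := by rwa [Prod.mk.eta] at h1
      have hub := shared_le h1'.1 h2.1 hfl1 hfl2 hpq
      have hmax : max |p.1 - q.1| |p.2 - q.2| = q.1 - p.1 := by
        rw [habs1, habs2]; exact max_eq_left hcase
      exact ⟨πl, πv, h1', h2, by rw [hmax]; linarith [hub, h3, hmax ▸ hub]⟩
    · obtain ⟨πl, πv, h1, h2, h3⟩ :=
        exists_case2 P l.1 l.2 p q hs ht hp hq hsp hpq1 hqt htp hpq2 hqs
      have h1' : InPi P l πl := by rwa [Prod.mk.eta] at h1
      have hub := shared_le h1'.1 h2.1 hfl1 hfl2 hpq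
      have hmax : max |p.1 - q.1| |p.2 - q.2| = q.2 - p.2 := by
        rw [habs1, habs2]; exact max_eq_right hcase
      exact ⟨πl, πv, h1', h2, by rw [hmax]; linarith [hub, h3, hmax ▸ hub]⟩
  · -- upper bound
    rintro x ⟨πl, πv, h1, h2, rfl⟩
    exact shared_le h1.1 h2.1 hfl1 hfl2 hpq

end
end

section
/- Let P be a GMMN instance whose intersection graph IG[P] is k-colorable, i.e., P can be partitioned into k sets each of which is an independent set of IG[P], and let N* ∈ Opt(P) be an optimal solution for P. Then every feasible solution N ∈ Feas(P) satisfies ‖N‖ ≤ k·‖N*‖. (Proposition B.1.) -/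
noncomputable section
open scoped Classical

/-! ### Auxiliary lemmas -/

lemma sym2Len_nonneg (e : Sym2 Point) : 0 ≤ sym2Len e := by
  induction e using Sym2.inductionOn with
  | hf a b => exact Real.sqrt_nonneg _

lemma netLength_nonneg (N : Finset (Sym2 Point)) : 0 ≤ netLength N :=
  Finset.sum_nonneg fun e _ => sym2Len_nonneg e

lemma netLength_mono {A B : Finset (Sym2 Point)} (h : A ⊆ B) : netLength A ≤ netLength B :=
  Finset.sum_le_sum_of_subset_of_nonneg h fun e _ _ => sym2Len_nonneg e

lemma netLength_union_le (A B : Finset (Sym2 Point)) :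
    netLength (A ∪ B) ≤ netLength A + netLength B := by
  have h := Finset.sum_union_inter (s₁ := A) (s₂ := B) (f := sym2Len)
  have h2 := netLength_nonneg (A ∩ B)
  unfold netLength at *
  linarith

lemma netLength_biUnion_le {α : Type*} [DecidableEq α] (S : Finset α)
    (t : α → Finset (Sym2 Point)) :
    netLength (S.biUnion t) ≤ ∑ i ∈ S, netLength (t i) := by
  classical
  induction S using Finset.induction with
  | empty => simp [netLength]
  | @insert _ _ h ih =>
    rw [Finset.biUnion_insert, Finset.sum_insert h]
    exact le_trans (netLength_union_le _ _) (by linarith)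

lemma tele1 (a : ℕ → ℝ) (n : ℕ) :
    |a 0 - a n| ≤ ∑ i ∈ Finset.range n, |a i - a (i + 1)| := by
  have h : a 0 - a n = ∑ i ∈ Finset.range n, (a i - a (i + 1)) :=
    (Finset.sum_range_sub' a n).symm
  rw [h]
  exact Finset.abs_sum_le_sum_abs _ _

lemma tele2 (a : ℕ → ℝ) (j n : ℕ) (h : j ≤ n) :
    |a j - a n| ≤ ∑ i ∈ Finset.Ico j n, |a i - a (i + 1)| := by
  have h1 : ∑ i ∈ Finset.Ico j n, (a i - a (i + 1)) = a j - a n := by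
    rw [Finset.sum_Ico_eq_sub _ h, Finset.sum_range_sub' a, Finset.sum_range_sub' a]
    ring
  rw [← h1]
  exact Finset.abs_sum_le_sum_abs _ _

lemma manh_tele1 (a : ℕ → Point) (n : ℕ) :
    manh (a 0) (a n) ≤ ∑ i ∈ Finset.range n, manh (a i) (a (i + 1)) := by
  unfold manh
  rw [Finset.sum_add_distrib]
  exact add_le_add (tele1 (fun i => (a i).1) n) (tele1 (fun i => (a i).2) n)

lemma manh_tele2 (a : ℕ → Point) (j n : ℕ) (h : j ≤ n) :
    manh (a j) (a n) ≤ ∑ i ∈ Finset.Ico j n, manh (a i) (a (i + 1)) := by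
  unfold manh
  rw [Finset.sum_add_distrib]
  exact add_le_add (tele2 (fun i => (a i).1) j n h) (tele2 (fun i => (a i).2) j n h)

lemma euclen_eq_manh {p q : Point} (h : axisAligned p q) : euclen p q = manh p q := by
  unfold euclen manh
  rcases h with h | h
  · rw [h]
    simp [Real.sqrt_sq_eq_abs]
  · rw [h]
    simp [Real.sqrt_sq_eq_abs]

lemma between_of_eq {x y z : ℝ} (h : |x - z| + |z - y| = |x - y|) :
    min x y ≤ z ∧ z ≤ max x y := by
  constructor
  · by_contra h'
    push_neg at h'
    rw [lt_min_iff] at h'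
    have h1 : |x - z| = x - z := abs_of_pos (by linarith [h'.1])
    have h2 : |z - y| = y - z := by
      rw [abs_of_neg (by linarith [h'.2] : z - y < 0)]; ring
    have h3 : |x - y| < (x - z) + (y - z) :=
      abs_sub_lt_iff.mpr ⟨by linarith [h'.2], by linarith [h'.1]⟩
    linarith
  · by_contra h'
    push_neg at h'
    rw [max_lt_iff] at h'
    have h1 : |x - z| = z - x := by
      rw [abs_of_neg (by linarith [h'.1] : x - z < 0)]; ring
    have h2 : |z - y| = z - y := abs_of_pos (by linarith [h'.2])
    have h3 : |x - y| < (z - x) + (z - y) :=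
      abs_sub_lt_iff.mpr ⟨by linarith [h'.2], by linarith [h'.1]⟩
    linarith

/-- Every vertex of an M-path for `(s, t)` lies in the bounding box `B(s, t)`. -/
lemma mpath_box {s t : Point} {π : GPath} (hπ : IsMPath s t π) (j : Fin (π.k + 1)) :
    inBox s t (π.pts j) := by
  obtain ⟨hs, ht, hax, hlen⟩ := hπ
  have hk : ∀ i : ℕ, min i π.k < π.k + 1 := fun i => Nat.lt_succ_of_le (min_le_right _ _)
  set a : ℕ → Point := fun i => π.pts ⟨min i π.k, hk i⟩ with ha
  have haval : ∀ i : Fin (π.k + 1), a i.val = π.pts i := by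
    intro i
    simp only [ha]
    congr 1
    exact Fin.ext (by simpa using Nat.min_eq_left (Nat.lt_succ_iff.mp i.isLt))
  have ha0 : a 0 = s := by
    have := haval 0; simpa [hs] using this
  have hak : a π.k = t := by
    have h := haval (Fin.last π.k)
    rw [ht] at h
    simpa using h
  have hjle : j.val ≤ π.k := Nat.lt_succ_iff.mp j.isLt
  have haj : a j.val = π.pts j := haval j
  -- total Manhattan length over range π.k equals manh s t
  have hlen' : ∑ i ∈ Finset.range π.k, manh (a i) (a (i + 1)) = manh s t := by
    rw [← hlen]
    unfold GPath.length
    rw [← Fin.sum_univ_eq_sum_range (fun i => manh (a i) (a (i + 1))) π.k]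
    apply Finset.sum_congr rfl
    intro i _
    have e1 : a i.val = π.pts i.castSucc := by
      have := haval i.castSucc; simpa using this
    have e2 : a (i.val + 1) = π.pts i.succ := by
      have := haval i.succ; simpa using this
    rw [e1, e2, euclen_eq_manh (hax i)]
  have h1 : manh (a 0) (a j.val) ≤ ∑ i ∈ Finset.range j.val, manh (a i) (a (i + 1)) :=
    manh_tele1 a j.val
  have h2 : manh (a j.val) (a π.k) ≤ ∑ i ∈ Finset.Ico j.val π.k, manh (a i) (a (i + 1)) :=
    manh_tele2 a j.val π.k hjle
  have hsum : ∑ i ∈ Finset.range j.val, manh (a i) (a (i + 1)) +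
      ∑ i ∈ Finset.Ico j.val π.k, manh (a i) (a (i + 1)) =
      ∑ i ∈ Finset.range π.k, manh (a i) (a (i + 1)) := by
    rw [Finset.range_eq_Ico, Finset.range_eq_Ico]
    exact Finset.sum_Ico_consecutive (fun i => manh (a i) (a (i + 1))) (Nat.zero_le _) hjle
  set p : Point := π.pts j with hp
  have hle : manh s p + manh p t ≤ manh s t := by
    rw [← hlen', ← hsum, ← ha0, ← hak, ← haj]
    exact add_le_add h1 h2
  have htri1 : |s.1 - t.1| ≤ |s.1 - p.1| + |p.1 - t.1| := abs_sub_le s.1 p.1 t.1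
  have htri2 : |s.2 - t.2| ≤ |s.2 - p.2| + |p.2 - t.2| := abs_sub_le s.2 p.2 t.2
  unfold manh at hle
  have e1 : |s.1 - p.1| + |p.1 - t.1| = |s.1 - t.1| := by linarith
  have e2 : |s.2 - p.2| + |p.2 - t.2| = |s.2 - t.2| := by linarith
  obtain ⟨b1, b2⟩ := between_of_eq e1
  obtain ⟨b3, b4⟩ := between_of_eq e2
  constructor
  · rw [Prod.le_def]
    constructor
    · simpa [Prod.inf_def] using b1
    · simpa [Prod.inf_def] using b3
  · rw [Prod.le_def]
    constructor
    · simpa [Prod.sup_def] using b2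
    · simpa [Prod.sup_def] using b4

lemma edge_inj (π : GPath) : Function.Injective π.edge := by
  intro i j h
  rw [GPath.edge, GPath.edge, Sym2.eq_iff] at h
  rcases h with ⟨h1, _⟩ | ⟨h1, h2⟩
  · have := π.inj h1
    exact Fin.castSucc_injective _ this
  · have e1 := congrArg Fin.val (π.inj h1)
    have e2 := congrArg Fin.val (π.inj h2)
    simp [Fin.val_succ] at e1 e2
    exact Fin.ext (by omega)

lemma netLength_edges (π : GPath) : netLength π.edges = π.length := by
  unfold netLength GPath.edges GPath.length
  rw [Finset.sum_image (fun x _ y _ h => edge_inj π h)]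
  rfl

/-- Paths on the grid for non-adjacent distinct pairs are edge-disjoint. -/
lemma edges_disjoint (P : Inst) {u v : Point × Point} {πu πv : GPath}
    (hu : InPi P u πu) (hv : InPi P v πv) (hnadj : ¬ IGAdj P u v) (hne : u ≠ v) :
    Disjoint πu.edges πv.edges := by
  rw [Finset.disjoint_left]
  intro e heu hev
  rw [GPath.edges, Finset.mem_image] at heu hev
  obtain ⟨i, _, hi⟩ := heu
  obtain ⟨i', _, hi'⟩ := hev
  apply hnadj
  refine ⟨hne, πu.pts i.castSucc, πu.pts i.succ, hu.2 i, ?_, ?_, ?_, ?_⟩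
  · exact mpath_box hu.1 i.castSucc
  · exact mpath_box hu.1 i.succ
  · have h := hi'.trans hi.symm
    rw [GPath.edge, GPath.edge, Sym2.eq_iff] at h
    rcases h with ⟨h1, _⟩ | ⟨_, h2⟩
    · rw [← h1]; exact mpath_box hv.1 i'.castSucc
    · rw [← h2]; exact mpath_box hv.1 i'.succ
  · have h := hi'.trans hi.symm
    rw [GPath.edge, GPath.edge, Sym2.eq_iff] at h
    rcases h with ⟨_, h2⟩ | ⟨h1, _⟩
    · rw [← h2]; exact mpath_box hv.1 i'.succ
    · rw [← h1]; exact mpath_box hv.1 i'.castSucc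

/-- Proposition B.1: if the intersection graph `IG[P]` is `k`-colorable, then every feasible
solution has length at most `k` times the length of an optimal solution. -/
theorem coloring_approximation (P : Inst) (k : ℕ)
    (hcol : ∃ c : Point × Point → Fin k,
      ∀ u ∈ P, ∀ v ∈ P, IGAdj P u v → c u ≠ c v)
    (f g : Point × Point → GPath) (hf : IsOptChoice P f) (hg : IsFeasChoice P g) :
    netLength (netOf P g) ≤ (k : ℝ) * netLength (netOf P f) := by
  classical
  obtain ⟨c, hc⟩ := hcol
  -- within a color class, the network decomposes as a disjoint union
  have key : ∀ (h : Point × Point → GPath), IsFeasChoice P h → ∀ i : Fin k,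
      netLength ((P.filter fun v => c v = i).biUnion fun v => (h v).edges)
        = ∑ v ∈ P.filter (fun v => c v = i), manh v.1 v.2 := by
    intro h hh i
    have hpd : Set.PairwiseDisjoint ↑(P.filter fun v => c v = i)
        (fun v => (h v).edges) := by
      intro u hu v hv huv
      rw [Finset.coe_filter] at hu hv
      obtain ⟨huP, hci⟩ := hu
      obtain ⟨hvP, hcj⟩ := hv
      refine edges_disjoint P (hh u huP) (hh v hvP) ?_ huv
      intro hadj
      exact hc u huP v hvP hadj (hci.trans hcj.symm)
    unfold netLength
    rw [Finset.sum_biUnion hpd]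
    apply Finset.sum_congr rfl
    intro v hv
    rw [Finset.mem_filter] at hv
    have : netLength (h v).edges = (h v).length := netLength_edges (h v)
    unfold netLength at this
    rw [this, (hh v hv.1).1.2.2.2]
  have hsplit : ∀ (h : Point × Point → GPath),
      netOf P h = (Finset.univ : Finset (Fin k)).biUnion
        (fun i => (P.filter fun v => c v = i).biUnion fun v => (h v).edges) := by
    intro h
    ext e
    simp only [netOf, Finset.mem_biUnion, Finset.mem_filter, Finset.mem_univ, true_and]
    constructor
    · rintro ⟨v, hv, he⟩
      exact ⟨c v, v, ⟨hv, rfl⟩, he⟩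
    · rintro ⟨i, v, ⟨hv, _⟩, he⟩
      exact ⟨v, hv, he⟩
  calc netLength (netOf P g)
      = netLength ((Finset.univ : Finset (Fin k)).biUnion
          (fun i => (P.filter fun v => c v = i).biUnion fun v => (g v).edges)) := by
        rw [hsplit g]
    _ ≤ ∑ i : Fin k, netLength
          ((P.filter fun v => c v = i).biUnion fun v => (g v).edges) :=
        netLength_biUnion_le _ _
    _ = ∑ i : Fin k, netLength
          ((P.filter fun v => c v = i).biUnion fun v => (f v).edges) := by
        apply Finset.sum_congr rfl
        intro i _
        rw [key g hg i, key f hf.1 i]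
    _ ≤ ∑ _i : Fin k, netLength (netOf P f) := by
        apply Finset.sum_le_sum
        intro i _
        apply netLength_mono
        exact Finset.biUnion_subset_biUnion_of_subset_left _ (Finset.filter_subset _ _)
    _ = (k : ℝ) * netLength (netOf P f) := by
        rw [Finset.sum_const, Finset.card_univ, Fintype.card_fin, nsmul_eq_mul]

end
end

section
/- Let P be a GMMN instance, let r = (s,t) ∈ P be a regular pair, let π ∈ Π_P(r) be a Manhattan path for r on the Hanan grid, and let l be a pair such that π intersects the bounding box B(l). Then the intersection π ∩ H(P,l) is a subpath of π between two vertices p and q with p ≤ q, and this subpath is a Manhattan path for the (regular) pair (p,q). Moreover, (p,q) is called the in-out pair of π for l. -/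
noncomputable section
open scoped Classical

lemma euclen_axis {a b : Point} (h : axisAligned a b) :
    euclen a b = |a.1 - b.1| + |a.2 - b.2| := by
  rcases h with h | h
  · simp [euclen, h, Real.sqrt_sq_eq_abs]
  · simp [euclen, h, Real.sqrt_sq_eq_abs]

/-- If an M-path `π ∈ Π_P(r)` for a regular pair `r ∈ P` intersects the bounding box `B(l)`,
then `π ∩ H(P, l)` is a subpath of `π` between vertices `p = π.pts i` and `q = π.pts j` with
`p ≤ q` (the in-out pair of `π` for `l`), and this subpath is an M-path for `(p, q)`. -/
theorem in_out_pair (P : Inst) (r : Point × Point) (hr : r ∈ P) (hreg : Regular r)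
    (π : GPath) (hπ : InPi P r π) (l : Point × Point)
    (hint : ∃ i : Fin (π.k + 1), inBox l.1 l.2 (π.pts i)) :
    ∃ i j : Fin (π.k + 1), i ≤ j ∧ π.pts i ≤ π.pts j ∧
      (∀ m : Fin (π.k + 1), inBox l.1 l.2 (π.pts m) ↔ i ≤ m ∧ m ≤ j) ∧
      ∃ π' : GPath, IsMPath (π.pts i) (π.pts j) π' ∧
        π'.edges = π.edges.filter fun e => ∀ z ∈ e, inBox l.1 l.2 z := by
  classical
  obtain ⟨⟨h0, hlast, hax, hlen⟩, hG⟩ := hπ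
  -- clamped point sequence
  have hle : ∀ n : ℕ, min n π.k < π.k + 1 := fun n => Nat.lt_succ_of_le (min_le_right _ _)
  set p : ℕ → Point := fun n => π.pts ⟨min n π.k, hle n⟩ with hpdef
  have hpeq : ∀ (n : ℕ) (h : n < π.k + 1), p n = π.pts ⟨n, h⟩ := by
    intro n h
    simp only [hpdef]
    congr 1 <;> exact Fin.ext (by simp; omega)
  have hpF : ∀ m : Fin (π.k + 1), p (m : ℕ) = π.pts m := by
    intro m; rw [hpeq m m.isLt]
  have hp0 : p 0 = r.1 := by
    rw [hpeq 0 (by omega)]; exact h0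
  have hpk : p π.k = r.2 := by
    rw [hpeq π.k (by omega)]; exact hlast
  -- edge endpoints in terms of p
  have hcs : ∀ m : Fin π.k, π.pts m.castSucc = p (m : ℕ) := by
    intro m
    rw [hpeq m (by omega)]
    congr 1 <;> exact Fin.ext (by simp)
  have hsc : ∀ m : Fin π.k, π.pts m.succ = p ((m : ℕ) + 1) := by
    intro m
    rw [hpeq ((m : ℕ) + 1) (by omega)]
    congr 1 <;> exact Fin.ext (by simp)
  -- axis-alignedness in p form
  have haxp : ∀ n < π.k, axisAligned (p n) (p (n + 1)) := by
    intro n hn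
    have := hax ⟨n, hn⟩
    rwa [hcs ⟨n, hn⟩, hsc ⟨n, hn⟩] at this
  -- the length sum
  have hlen' : ∑ n ∈ Finset.range π.k,
      (|(p (n+1)).1 - (p n).1| + |(p (n+1)).2 - (p n).2|) = manh r.1 r.2 := by
    rw [← hlen]
    unfold GPath.length
    rw [← Fin.sum_univ_eq_sum_range
      (fun n => |(p (n+1)).1 - (p n).1| + |(p (n+1)).2 - (p n).2|) π.k]
    apply Finset.sum_congr rfl
    intro m _
    rw [hcs m, hsc m, euclen_axis (haxp m m.isLt)]
    rw [abs_sub_comm, abs_sub_comm ((p (m:ℕ)).2)]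
  have hDx : ∑ n ∈ Finset.range π.k, ((p (n+1)).1 - (p n).1) = r.2.1 - r.1.1 := by
    rw [Finset.sum_range_sub (fun n => (p n).1), hp0, hpk]
  have hDy : ∑ n ∈ Finset.range π.k, ((p (n+1)).2 - (p n).2) = r.2.2 - r.1.2 := by
    rw [Finset.sum_range_sub (fun n => (p n).2), hp0, hpk]
  have hmanh : manh r.1 r.2 = (r.2.1 - r.1.1) + (r.2.2 - r.1.2) := by
    obtain ⟨hx, hy⟩ := hreg
    unfold manh
    rw [abs_sub_comm, abs_of_nonneg (by linarith), abs_sub_comm, abs_of_nonneg (by linarith)]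
  -- monotone steps
  have hstep : ∀ n < π.k, (p n).1 ≤ (p (n+1)).1 ∧ (p n).2 ≤ (p (n+1)).2 := by
    have hsum0 : ∑ n ∈ Finset.range π.k,
        ((|(p (n+1)).1 - (p n).1| - ((p (n+1)).1 - (p n).1)) +
         (|(p (n+1)).2 - (p n).2| - ((p (n+1)).2 - (p n).2))) = 0 := by
      have e1 : ∑ n ∈ Finset.range π.k,
          ((|(p (n+1)).1 - (p n).1| - ((p (n+1)).1 - (p n).1)) +
           (|(p (n+1)).2 - (p n).2| - ((p (n+1)).2 - (p n).2)))
          = (∑ n ∈ Finset.range π.k,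
              (|(p (n+1)).1 - (p n).1| + |(p (n+1)).2 - (p n).2|))
            - (∑ n ∈ Finset.range π.k, ((p (n+1)).1 - (p n).1))
            - (∑ n ∈ Finset.range π.k, ((p (n+1)).2 - (p n).2)) := by
        rw [← Finset.sum_sub_distrib, ← Finset.sum_sub_distrib]
        apply Finset.sum_congr rfl
        intro n _; ring
      rw [e1, hlen', hDx, hDy, hmanh]; ring
    have hterm := (Finset.sum_eq_zero_iff_of_nonneg ?_).1 hsum0
    · intro n hn
      have h := hterm n (Finset.mem_range.2 hn)
      have h1 : (0:ℝ) ≤ |(p (n+1)).1 - (p n).1| - ((p (n+1)).1 - (p n).1) := by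
        have := le_abs_self ((p (n+1)).1 - (p n).1); linarith
      have h2 : (0:ℝ) ≤ |(p (n+1)).2 - (p n).2| - ((p (n+1)).2 - (p n).2) := by
        have := le_abs_self ((p (n+1)).2 - (p n).2); linarith
      constructor
      · have hz : |(p (n+1)).1 - (p n).1| - ((p (n+1)).1 - (p n).1) = 0 := by linarith
        have := abs_nonneg ((p (n+1)).1 - (p n).1); linarith [abs_nonneg ((p (n+1)).1 - (p n).1)]
      · have hz : |(p (n+1)).2 - (p n).2| - ((p (n+1)).2 - (p n).2) = 0 := by linarith
        have := abs_nonneg ((p (n+1)).2 - (p n).2); linarith [abs_nonneg ((p (n+1)).2 - (p n).2)]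
    · intro n _
      have h1 := le_abs_self ((p (n+1)).1 - (p n).1)
      have h2 := le_abs_self ((p (n+1)).2 - (p n).2)
      linarith
  -- monotonicity
  have hmono : ∀ a b : ℕ, a ≤ b → b ≤ π.k → p a ≤ p b := by
    intro a b hab hbk
    induction b, hab using Nat.le_induction with
    | base => exact le_refl _
    | succ n hn ih =>
      have h1 : p a ≤ p n := ih (by omega)
      have h2 := hstep n (by omega)
      exact le_trans h1 ⟨h2.1, h2.2⟩
  have hmonoF : ∀ a b : Fin (π.k + 1), a ≤ b → π.pts a ≤ π.pts b := by
    intro a b hab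
    rw [← hpF a, ← hpF b]
    exact hmono a b hab (by omega)
  -- the interval
  set S : Finset (Fin (π.k + 1)) :=
    Finset.univ.filter (fun m => inBox l.1 l.2 (π.pts m)) with hSdef
  have hS : S.Nonempty := by
    obtain ⟨i, hi⟩ := hint
    exact ⟨i, Finset.mem_filter.2 ⟨Finset.mem_univ _, hi⟩⟩
  set i := S.min' hS with hidef
  set j := S.max' hS with hjdef
  have hiS : inBox l.1 l.2 (π.pts i) := (Finset.mem_filter.1 (S.min'_mem hS)).2
  have hjS : inBox l.1 l.2 (π.pts j) := (Finset.mem_filter.1 (S.max'_mem hS)).2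
  have hij : i ≤ j := S.min'_le _ (S.max'_mem hS)
  have hbox : ∀ m : Fin (π.k + 1), inBox l.1 l.2 (π.pts m) ↔ i ≤ m ∧ m ≤ j := by
    intro m
    constructor
    · intro hm
      have hmS : m ∈ S := Finset.mem_filter.2 ⟨Finset.mem_univ _, hm⟩
      exact ⟨S.min'_le _ hmS, S.le_max' _ hmS⟩
    · rintro ⟨him, hmj⟩
      exact ⟨le_trans hiS.1 (hmonoF i m him), le_trans (hmonoF m j hmj) hjS.2⟩
  refine ⟨i, j, hij, hmonoF i j hij, hbox, ?_⟩
  -- the subpath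
  have hijn : (i : ℕ) ≤ (j : ℕ) := hij
  have hjk : (j : ℕ) ≤ π.k := by omega
  have hb : ∀ n : Fin ((j : ℕ) - (i : ℕ) + 1), (i : ℕ) + (n : ℕ) < π.k + 1 := by
    intro n; have hnn : (n:ℕ) < (j:ℕ) - (i:ℕ) + 1 := n.isLt; omega
  set q : Fin ((j : ℕ) - (i : ℕ) + 1) → Point := fun n => π.pts ⟨(i : ℕ) + (n : ℕ), hb n⟩
    with hqdef
  have hqinj : Function.Injective q := by
    intro a b hab
    have := π.inj hab
    have hv : (i : ℕ) + (a : ℕ) = (i : ℕ) + (b : ℕ) := congrArg Fin.val this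
    exact Fin.ext (by omega)
  set π' : GPath := ⟨(j : ℕ) - (i : ℕ), q, hqinj⟩ with hπ'def
  -- edge endpoints of π'
  have hqcs : ∀ n : Fin π'.k, π'.pts n.castSucc = p ((i : ℕ) + (n : ℕ)) := by
    intro n
    show q n.castSucc = _
    rw [hqdef, hpeq ((i:ℕ) + (n:ℕ)) (by have hnn : (n:ℕ) < (j:ℕ) - (i:ℕ) := n.isLt; omega)]
    congr 1 <;> exact Fin.ext (by simp)
  have hqsc : ∀ n : Fin π'.k, π'.pts n.succ = p ((i : ℕ) + ((n : ℕ) + 1)) := by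
    intro n
    show q n.succ = _
    rw [hqdef, hpeq ((i:ℕ) + ((n:ℕ) + 1)) (by have hnn : (n:ℕ) < (j:ℕ) - (i:ℕ) := n.isLt; omega)]
    congr 1 <;> exact Fin.ext (by simp)
  refine ⟨π', ⟨?_, ?_, ?_, ?_⟩, ?_⟩
  · -- start
    show q 0 = π.pts i
    exact congrArg π.pts (Fin.ext (by simp))
  · -- end
    show q (Fin.last ((j : ℕ) - (i : ℕ))) = π.pts j
    exact congrArg π.pts (Fin.ext (by simp only [Fin.val_last]; omega))
  · -- axis aligned
    intro n
    rw [hqcs n, hqsc n]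
    exact haxp _ (by have hnn : (n:ℕ) < (j:ℕ) - (i:ℕ) := n.isLt; show (i:ℕ) + (n:ℕ) < π.k; omega)
  · -- length
    show π'.length = manh (π.pts i) (π.pts j)
    have hptsij : π.pts i ≤ π.pts j := hmonoF i j hij
    have hmanh' : manh (π.pts i) (π.pts j)
        = ((π.pts j).1 - (π.pts i).1) + ((π.pts j).2 - (π.pts i).2) := by
      unfold manh
      rw [abs_sub_comm, abs_of_nonneg (by linarith [hptsij.1]),
          abs_sub_comm, abs_of_nonneg (by linarith [hptsij.2])]
    unfold GPath.length
    have e1 : ∑ n : Fin π'.k, euclen (π'.pts n.castSucc) (π'.pts n.succ)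
        = ∑ n ∈ Finset.range ((j:ℕ) - (i:ℕ)),
            (((p ((i:ℕ) + (n + 1))).1 - (p ((i:ℕ) + n)).1) +
             ((p ((i:ℕ) + (n + 1))).2 - (p ((i:ℕ) + n)).2)) := by
      rw [← Fin.sum_univ_eq_sum_range
        (fun n => (((p ((i:ℕ) + (n + 1))).1 - (p ((i:ℕ) + n)).1) +
             ((p ((i:ℕ) + (n + 1))).2 - (p ((i:ℕ) + n)).2))) ((j:ℕ) - (i:ℕ))]
      apply Finset.sum_congr rfl
      intro n _
      have hadd : (i:ℕ) + ((n:ℕ) + 1) = (i:ℕ) + (n:ℕ) + 1 := by omega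
      rw [hqcs n, hqsc n, hadd,
        euclen_axis (haxp _ (by have hnn : (n:ℕ) < (j:ℕ) - (i:ℕ) := n.isLt; show (i:ℕ)+(n:ℕ) < π.k; omega))]
      have hs := hstep ((i:ℕ) + (n:ℕ)) (by have hnn : (n:ℕ) < (j:ℕ) - (i:ℕ) := n.isLt; omega)
      rw [abs_sub_comm, abs_of_nonneg (by linarith [hs.1]),
          abs_sub_comm, abs_of_nonneg (by linarith [hs.2])]
    rw [e1, Finset.sum_add_distrib,
        Finset.sum_range_sub (fun n => (p ((i:ℕ) + n)).1),
        Finset.sum_range_sub (fun n => (p ((i:ℕ) + n)).2), hmanh']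
    have h1 : (i:ℕ) + ((j:ℕ) - (i:ℕ)) = (j:ℕ) := by omega
    have h2 : (i:ℕ) + 0 = (i:ℕ) := by omega
    rw [h1, h2, hpF i, hpF j]
  · -- edges
    ext e
    simp only [GPath.edges, Finset.mem_image, Finset.mem_univ, true_and, Finset.mem_filter]
    constructor
    · rintro ⟨n, rfl⟩
      have hnn : (n:ℕ) < (j:ℕ) - (i:ℕ) := n.isLt
      have hnk : (i:ℕ) + (n:ℕ) < π.k := by omega
      have e1 : q n.castSucc = π.pts ((⟨(i:ℕ) + (n:ℕ), hnk⟩ : Fin π.k).castSucc) :=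
        congrArg π.pts (Fin.ext (by simp))
      have e2 : q n.succ = π.pts ((⟨(i:ℕ) + (n:ℕ), hnk⟩ : Fin π.k).succ) :=
        congrArg π.pts (Fin.ext (by simp; omega))
      have he : π'.edge n = π.edge ⟨(i:ℕ) + (n:ℕ), hnk⟩ := by
        show s(q n.castSucc, q n.succ) = s(π.pts _, π.pts _)
        rw [e1, e2]
      refine ⟨⟨⟨(i:ℕ) + (n:ℕ), hnk⟩, he.symm⟩, ?_⟩
      intro z hz
      rw [he] at hz
      simp only [GPath.edge] at hz
      rcases Sym2.mem_iff.1 hz with rfl | rfl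
      · refine (hbox _).2 ⟨?_, ?_⟩ <;> (simp [Fin.le_def] <;> omega)
      · refine (hbox _).2 ⟨?_, ?_⟩ <;> (simp [Fin.le_def] <;> omega)
    · rintro ⟨⟨m, rfl⟩, hcond⟩
      have hc1 : inBox l.1 l.2 (π.pts m.castSucc) :=
        hcond _ (by simp only [GPath.edge]; exact Sym2.mem_iff.2 (Or.inl rfl))
      have hc2 : inBox l.1 l.2 (π.pts m.succ) :=
        hcond _ (by simp only [GPath.edge]; exact Sym2.mem_iff.2 (Or.inr rfl))
      have hb1 := (hbox m.castSucc).1 hc1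
      have hb2 := (hbox m.succ).1 hc2
      have him : (i:ℕ) ≤ (m:ℕ) := by
        have h := hb1.1; rw [Fin.le_def] at h; simpa using h
      have hmj : (m:ℕ) + 1 ≤ (j:ℕ) := by
        have h := hb2.2; rw [Fin.le_def] at h; simpa using h
      have hn : (m:ℕ) - (i:ℕ) < (j:ℕ) - (i:ℕ) := by omega
      refine ⟨⟨(m:ℕ) - (i:ℕ), hn⟩, ?_⟩
      have e1 : q ((⟨(m:ℕ) - (i:ℕ), hn⟩ : Fin ((j:ℕ) - (i:ℕ))).castSucc) = π.pts m.castSucc :=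
        congrArg π.pts (Fin.ext (by simp; omega))
      have e2 : q ((⟨(m:ℕ) - (i:ℕ), hn⟩ : Fin ((j:ℕ) - (i:ℕ))).succ) = π.pts m.succ :=
        congrArg π.pts (Fin.ext (by simp; omega))
      show s(q _, q _) = s(π.pts m.castSucc, π.pts m.succ)
      rw [e1, e2]

end
end
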